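/- arXiv:1504.03572 — 7 statements merged into one kernel-verified Lean document; each statement's English description precedes it below -/
import Mathlib

section
/- Every Hermitian operator G on H⊗H that is invariant under conjugation by the SWAP operator can be written as G = 1⊗A + A⊗1 + Σ_i b_i B_i⊗B_i where A and the B_i are Hermitian operators on H and b_i ∈ ℝ. -/
open Matrix Kronecker

noncomputable section

/-- The SWAP operator on ℂ^d ⊗ ℂ^d. -/
def swapM (d : ℕ) : Matrix (Fin d × Fin d) (Fin d × Fin d) ℂ :=
  Matrix.of fun p q => if p.1 = q.2 ∧ p.2 = q.1 then 1 else 0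

namespace SwapDecomp
variable {d : ℕ}

lemma swap_mul (M : Matrix (Fin d × Fin d) (Fin d × Fin d) ℂ) :
    swapM d * M = M.submatrix Prod.swap id := by
  ext p q
  rw [Matrix.mul_apply, Finset.sum_eq_single ((p.2, p.1) : Fin d × Fin d)]
  · simp [swapM, Prod.swap]
  · intro r _ hr
    simp only [swapM, Matrix.of_apply, ite_mul, one_mul, zero_mul]
    rw [if_neg]
    rintro ⟨h1, h2⟩
    exact hr (Prod.ext h2.symm h1.symm)
  · simp

lemma mul_swap (M : Matrix (Fin d × Fin d) (Fin d × Fin d) ℂ) :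
    M * swapM d = M.submatrix id Prod.swap := by
  ext p q
  rw [Matrix.mul_apply, Finset.sum_eq_single ((q.2, q.1) : Fin d × Fin d)]
  · simp [swapM, Prod.swap]
  · intro r _ hr
    simp only [swapM, Matrix.of_apply, mul_ite, mul_one, mul_zero]
    rw [if_neg]
    rintro ⟨h1, h2⟩
    exact hr (Prod.ext h1 h2)
  · simp

lemma swap_conj_kron (A B : Matrix (Fin d) (Fin d) ℂ) :
    swapM d * (A ⊗ₖ B) * swapM d = B ⊗ₖ A := by
  rw [swap_mul, mul_swap]
  ext ⟨a, b⟩ ⟨c, e⟩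
  simp [mul_comm]

lemma kron_conjTranspose (A B : Matrix (Fin d) (Fin d) ℂ) :
    (A ⊗ₖ B)ᴴ = Aᴴ ⊗ₖ Bᴴ := by
  ext ⟨a, b⟩ ⟨c, e⟩
  simp [conjTranspose_apply, kroneckerMap_apply]

lemma sub_kron (A B C : Matrix (Fin d) (Fin d) ℂ) : (A - B) ⊗ₖ C = A ⊗ₖ C - B ⊗ₖ C := by
  ext ⟨a, b⟩ ⟨c, e⟩; simp [kroneckerMap_apply, sub_mul]

lemma kron_sub (A B C : Matrix (Fin d) (Fin d) ℂ) : A ⊗ₖ (B - C) = A ⊗ₖ B - A ⊗ₖ C := by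
  ext ⟨a, b⟩ ⟨c, e⟩; simp [kroneckerMap_apply, mul_sub]

abbrev L (d : ℕ) := (Fin d × Fin d) ⊕ (Fin d × Fin d)

def E (p : Fin d × Fin d) : Matrix (Fin d) (Fin d) ℂ :=
  Matrix.single p.1 p.2 1

def F : L d → Matrix (Fin d) (Fin d) ℂ
  | .inl p => E p + E p.swap
  | .inr p => Complex.I • (E p - E p.swap)

lemma E_conjTranspose (p : Fin d × Fin d) : (E p)ᴴ = E p.swap := by
  ext a b
  simp [E, conjTranspose_apply, Matrix.single, and_comm]

lemma F_herm (l : L d) : (F l).IsHermitian := by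
  cases l with
  | inl p =>
    simp [Matrix.IsHermitian, F, conjTranspose_add, E_conjTranspose, add_comm]
  | inr p =>
    simp only [Matrix.IsHermitian, F, conjTranspose_smul, conjTranspose_sub, E_conjTranspose,
      Prod.swap_swap, Complex.star_def, Complex.conj_I]
    rw [neg_smul, smul_sub, smul_sub]
    abel

lemma E_eq (p : Fin d × Fin d) :
    E p = (1/2 : ℂ) • F (.inl p) - (Complex.I/2) • F (.inr p) := by
  simp only [F, smul_add, smul_sub, smul_smul]
  have : Complex.I / 2 * Complex.I = -(1/2) := by
    rw [div_mul_eq_mul_div, Complex.I_mul_I]; norm_num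
  rw [this]
  module

lemma reconstruct (M : Matrix (Fin d × Fin d) (Fin d × Fin d) ℂ) :
    M = ∑ p : Fin d × Fin d, ∑ q : Fin d × Fin d,
        M (p.1, q.1) (p.2, q.2) • (E p ⊗ₖ E q) := by
  ext ⟨a, b⟩ ⟨c, e⟩
  simp only [Matrix.sum_apply, Matrix.smul_apply, kroneckerMap_apply, smul_eq_mul]
  rw [Finset.sum_eq_single ((a, c) : Fin d × Fin d)]
  · rw [Finset.sum_eq_single ((b, e) : Fin d × Fin d)]
    · simp [E, Matrix.single]
    · intro q _ hq
      simp only [E, Matrix.single, Matrix.of_apply]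
      rw [if_neg (show ¬(q.1 = b ∧ q.2 = e) from fun h => hq (Prod.ext h.1 h.2))]
      simp
    · simp
  · intro p _ hp
    apply Finset.sum_eq_zero
    intro q _
    simp only [E, Matrix.single, Matrix.of_apply]
    rw [if_neg (fun h => hp (Prod.ext h.1 h.2))]
    simp
  · simp

lemma key (p q : Fin d × Fin d) (co : ℂ) :
    co • (E p ⊗ₖ E q)
      = (co / 4) • (F (.inl p) ⊗ₖ F (.inl q))
        + (-Complex.I * co / 4) • (F (.inl p) ⊗ₖ F (.inr q))
        + (-Complex.I * co / 4) • (F (.inr p) ⊗ₖ F (.inl q))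
        + (-co / 4) • (F (.inr p) ⊗ₖ F (.inr q)) := by
  rw [E_eq p, E_eq q, sub_kron, kron_sub, kron_sub]
  simp only [Matrix.smul_kronecker, Matrix.kronecker_smul, smul_smul]
  match_scalars <;> ring_nf <;> simp [Complex.I_sq] <;> ring_nf

def z (G : Matrix (Fin d × Fin d) (Fin d × Fin d) ℂ) : L d → L d → ℂ
  | .inl p, .inl q => G (p.1, q.1) (p.2, q.2) / 4
  | .inl p, .inr q => -Complex.I * G (p.1, q.1) (p.2, q.2) / 4
  | .inr p, .inl q => -Complex.I * G (p.1, q.1) (p.2, q.2) / 4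
  | .inr p, .inr q => -(G (p.1, q.1) (p.2, q.2)) / 4

lemma claim1 (G : Matrix (Fin d × Fin d) (Fin d × Fin d) ℂ) :
    ∑ l : L d, ∑ l' : L d, z G l l' • (F l ⊗ₖ F l') = G := by
  conv_rhs => rw [reconstruct G]
  simp only [Fintype.sum_sum_type]
  rw [← Finset.sum_add_distrib]
  refine Finset.sum_congr rfl fun p _ => ?_
  rw [← Finset.sum_add_distrib, ← Finset.sum_add_distrib, ← Finset.sum_add_distrib]
  refine Finset.sum_congr rfl fun q _ => ?_
  rw [key p q (G (p.1, q.1) (p.2, q.2))]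
  simp only [z]
  abel

lemma claim2 (G : Matrix (Fin d × Fin d) (Fin d × Fin d) ℂ) (hG : G.IsHermitian) :
    ∑ l : L d, ∑ l' : L d, star (z G l l') • (F l ⊗ₖ F l') = G := by
  have : ∑ l : L d, ∑ l' : L d, star (z G l l') • (F l ⊗ₖ F l')
      = (∑ l : L d, ∑ l' : L d, z G l l' • (F l ⊗ₖ F l'))ᴴ := by
    rw [Matrix.conjTranspose_sum]
    refine Finset.sum_congr rfl fun l _ => ?_
    rw [Matrix.conjTranspose_sum]
    refine Finset.sum_congr rfl fun l' _ => ?_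
    rw [Matrix.conjTranspose_smul, kron_conjTranspose, (F_herm l).eq, (F_herm l').eq]
  rw [this, claim1, hG.eq]

lemma claim3 (G : Matrix (Fin d × Fin d) (Fin d × Fin d) ℂ)
    (hswap : swapM d * G * swapM d = G) :
    ∑ l : L d, ∑ l' : L d, z G l' l • (F l ⊗ₖ F l') = G := by
  have h : ∑ l : L d, ∑ l' : L d, z G l l' • (F l' ⊗ₖ F l) = G := by
    have : ∑ l : L d, ∑ l' : L d, z G l l' • (F l' ⊗ₖ F l)
        = swapM d * (∑ l : L d, ∑ l' : L d, z G l l' • (F l ⊗ₖ F l')) * swapM d := by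
      simp only [Matrix.sum_mul, Matrix.mul_sum, Matrix.smul_mul, Matrix.mul_smul]
      refine Finset.sum_congr rfl fun l _ => Finset.sum_congr rfl fun l' _ => ?_
      rw [swap_conj_kron]
    rw [this, claim1, hswap]
  rw [Finset.sum_comm]
  exact h

lemma claim4 (G : Matrix (Fin d × Fin d) (Fin d × Fin d) ℂ) (hG : G.IsHermitian)
    (hswap : swapM d * G * swapM d = G) :
    ∑ l : L d, ∑ l' : L d, star (z G l' l) • (F l ⊗ₖ F l') = G := by
  have : ∑ l : L d, ∑ l' : L d, star (z G l' l) • (F l ⊗ₖ F l')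
      = (∑ l : L d, ∑ l' : L d, z G l' l • (F l ⊗ₖ F l'))ᴴ := by
    rw [Matrix.conjTranspose_sum]
    refine Finset.sum_congr rfl fun l _ => ?_
    rw [Matrix.conjTranspose_sum]
    refine Finset.sum_congr rfl fun l' _ => ?_
    rw [Matrix.conjTranspose_smul, kron_conjTranspose, (F_herm l).eq, (F_herm l').eq]
  rw [this, claim3 G hswap, hG.eq]

end SwapDecomp

open SwapDecomp

theorem swap_invariant_decomposition {d : ℕ}
    (G : Matrix (Fin d × Fin d) (Fin d × Fin d) ℂ) (hG : G.IsHermitian)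
    (hswap : swapM d * G * swapM d = G) :
    ∃ (m : ℕ) (A : Matrix (Fin d) (Fin d) ℂ)
      (B : Fin m → Matrix (Fin d) (Fin d) ℂ) (b : Fin m → ℝ),
        A.IsHermitian ∧ (∀ i, (B i).IsHermitian) ∧
        G = (1 : Matrix (Fin d) (Fin d) ℂ) ⊗ₖ A + A ⊗ₖ 1
              + ∑ i, ((b i : ℂ)) • (B i ⊗ₖ B i) := by
  classical
  -- symmetrized real coefficients
  set cc : L d → L d → ℂ := fun l l' =>
    (z G l l' + star (z G l l') + z G l' l + star (z G l' l)) / 4 with hcc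
  have hreal : ∀ l l', ((cc l l').re : ℂ) = cc l l' := by
    intro l l'
    rw [← Complex.conj_eq_iff_re]
    simp only [hcc, map_div₀, map_add]
    simp only [Complex.star_def, Complex.conj_conj, map_ofNat]
    push_cast
    ring
  have hsym : ∀ l l', cc l l' = cc l' l := by
    intro l l'
    simp only [hcc]
    ring
  have hsum : ∑ l : L d, ∑ l' : L d, cc l l' • (F l ⊗ₖ F l') = G := by
    have expand : ∑ l : L d, ∑ l' : L d, cc l l' • (F l ⊗ₖ F l')
        = (4 : ℂ)⁻¹ • ∑ l : L d, ∑ l' : L d,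
            (z G l l' • (F l ⊗ₖ F l') + star (z G l l') • (F l ⊗ₖ F l')
              + z G l' l • (F l ⊗ₖ F l') + star (z G l' l) • (F l ⊗ₖ F l')) := by
      rw [Finset.smul_sum]
      refine Finset.sum_congr rfl fun l _ => ?_
      rw [Finset.smul_sum]
      refine Finset.sum_congr rfl fun l' _ => ?_
      simp only [hcc]
      match_scalars
      ring
    rw [expand]
    simp only [Finset.sum_add_distrib]
    rw [claim1 G, claim2 G hG, claim3 G hswap, claim4 G hG hswap]
    match_scalars
    norm_num
  -- the index type
  set I := (L d × L d) × Bool with hI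
  let e : Fin (Fintype.card I) ≃ I := (Fintype.equivFin I).symm
  set s : L d → L d → ℝ := fun l l' => (cc l l').re with hsdef
  let Bf : I → Matrix (Fin d) (Fin d) ℂ :=
    fun x => if x.2 then F x.1.1 + F x.1.2 else F x.1.1 - F x.1.2
  let bf : I → ℝ := fun x => if x.2 then s x.1.1 x.1.2 / 4 else -(s x.1.1 x.1.2) / 4
  have step : ∀ l l' : L d,
      ((bf ((l, l'), true) : ℂ)) • (Bf ((l, l'), true) ⊗ₖ Bf ((l, l'), true))
        + ((bf ((l, l'), false) : ℂ)) • (Bf ((l, l'), false) ⊗ₖ Bf ((l, l'), false))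
      = ((s l l' / 2 : ℝ) : ℂ) • (F l ⊗ₖ F l') + ((s l l' / 2 : ℝ) : ℂ) • (F l' ⊗ₖ F l) := by
    intro l l'
    simp only [Bf, bf, if_true, if_false, Bool.false_eq_true]
    rw [Matrix.add_kronecker, Matrix.kronecker_add, Matrix.kronecker_add,
      sub_kron, kron_sub, kron_sub]
    push_cast
    match_scalars <;> ring
  have comb : ∀ l l' : L d,
      ((s l l' / 2 : ℝ) : ℂ) • (F l ⊗ₖ F l') + ((s l' l / 2 : ℝ) : ℂ) • (F l ⊗ₖ F l')
        = cc l l' • (F l ⊗ₖ F l') := by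
    intro l l'
    rw [← add_smul]
    congr 1
    push_cast
    rw [show ((s l l' : ℝ) : ℂ) = cc l l' from hreal l l',
      show ((s l' l : ℝ) : ℂ) = cc l' l from hreal l' l, ← hsym l l']
    ring
  refine ⟨Fintype.card I, 0, fun i => Bf (e i), fun i => bf (e i),
    Matrix.isHermitian_zero, fun i => ?_, ?_⟩
  · show (Bf (e i)).IsHermitian
    simp only [Bf]
    split_ifs
    · exact (F_herm _).add (F_herm _)
    · exact (F_herm _).sub (F_herm _)
  · rw [Matrix.kronecker_zero, Matrix.zero_kronecker, add_zero, zero_add]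
    symm
    calc ∑ i : Fin (Fintype.card I), ((bf (e i) : ℂ)) • (Bf (e i) ⊗ₖ Bf (e i))
        = ∑ x : I, ((bf x : ℂ)) • (Bf x ⊗ₖ Bf x) :=
          Fintype.sum_equiv e _ _ (fun i => rfl)
      _ = ∑ y : L d × L d, (((bf (y, true) : ℂ)) • (Bf (y, true) ⊗ₖ Bf (y, true))
            + ((bf (y, false) : ℂ)) • (Bf (y, false) ⊗ₖ Bf (y, false))) := by
          rw [Fintype.sum_prod_type]
          exact Finset.sum_congr rfl fun y _ => Fintype.sum_bool _
      _ = ∑ l : L d, ∑ l' : L d, (((s l l' / 2 : ℝ) : ℂ) • (F l ⊗ₖ F l')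
            + ((s l l' / 2 : ℝ) : ℂ) • (F l' ⊗ₖ F l)) := by
          rw [Fintype.sum_prod_type]
          exact Finset.sum_congr rfl fun l _ => Finset.sum_congr rfl fun l' _ => step l l'
      _ = (∑ l : L d, ∑ l' : L d, ((s l l' / 2 : ℝ) : ℂ) • (F l ⊗ₖ F l'))
            + ∑ l : L d, ∑ l' : L d, ((s l l' / 2 : ℝ) : ℂ) • (F l' ⊗ₖ F l) := by
          simp only [Finset.sum_add_distrib]
      _ = (∑ l : L d, ∑ l' : L d, ((s l l' / 2 : ℝ) : ℂ) • (F l ⊗ₖ F l'))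
            + ∑ l : L d, ∑ l' : L d, ((s l' l / 2 : ℝ) : ℂ) • (F l ⊗ₖ F l') := by
          congr 1
          exact Finset.sum_comm
      _ = ∑ l : L d, ∑ l' : L d, cc l l' • (F l ⊗ₖ F l') := by
          rw [← Finset.sum_add_distrib]
          refine Finset.sum_congr rfl fun l _ => ?_
          rw [← Finset.sum_add_distrib]
          exact Finset.sum_congr rfl fun l' _ => comb l l'
      _ = G := hsum
end
end

section
/- Let G = 1⊗A + A⊗1 + Σ_k b_k B_k⊗B_k with A, B_k real matrices and b_k ≤ 0, and suppose G has a non-degenerate ground state |ψ⟩. Write |ψ⟩ = Σ_k λ_k |a_k⟩⊗|a_k⟩ with λ_k real and {|a_k⟩} real orthonormal. Then ⟨ψ̃|G|ψ̃⟩ ≤ ⟨ψ|G|ψ⟩ where |ψ̃⟩ = Σ_k |λ_k| |a_k⟩⊗|a_k⟩; hence by uniqueness of the ground state all λ_k have the same sign. -/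
open Matrix Kronecker

noncomputable section

private lemma sum_dot' {n ι : Type*} [Fintype n] [Fintype ι] (g : ι → n → ℂ) (w : n → ℂ) :
    (∑ k, g k) ⬝ᵥ w = ∑ k, g k ⬝ᵥ w := by
  simp only [dotProduct, Finset.sum_apply, Finset.sum_mul]
  exact Finset.sum_comm

private lemma dot_sum' {n ι : Type*} [Fintype n] [Fintype ι] (v : n → ℂ) (g : ι → n → ℂ) :
    v ⬝ᵥ (∑ k, g k) = ∑ k, v ⬝ᵥ g k := by
  simp only [dotProduct, Finset.sum_apply, Finset.mul_sum]
  exact Finset.sum_comm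

private lemma bilin' {n ι : Type*} [Fintype n] [Fintype ι] (M : Matrix n n ℂ) (c c' : ι → ℂ)
    (f : ι → n → ℂ) :
    (fun p => ∑ k, c k * f k p) ⬝ᵥ M.mulVec (fun p => ∑ k, c' k * f k p)
      = ∑ k, ∑ k', c k * c' k' * ((f k) ⬝ᵥ M.mulVec (f k')) := by
  have h1 : (fun p => ∑ k, c k * f k p) = ∑ k, c k • f k := by
    funext p; simp [Finset.sum_apply]
  have h2 : M.mulVec (fun p => ∑ k, c' k * f k p) = ∑ k, c' k • M.mulVec (f k) := by
    have h3 : (fun p => ∑ k, c' k * f k p) = ∑ k, c' k • f k := by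
      funext p; simp [Finset.sum_apply]
    rw [h3, ← M.mulVecLin_apply, map_sum]
    simp [Matrix.mulVecLin_apply]
  rw [h1, h2, sum_dot']
  refine Finset.sum_congr rfl fun k _ => ?_
  rw [smul_dotProduct, dot_sum', smul_eq_mul, Finset.mul_sum]
  refine Finset.sum_congr rfl fun k' _ => ?_
  rw [dotProduct_smul, smul_eq_mul]
  ring

private lemma kron_dot' {d : ℕ} (M N : Matrix (Fin d) (Fin d) ℂ) (u u' v v' : Fin d → ℂ) :
    (fun p : Fin d × Fin d => u p.1 * u' p.2) ⬝ᵥ (M ⊗ₖ N).mulVec (fun p => v p.1 * v' p.2)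
      = (u ⬝ᵥ M.mulVec v) * (u' ⬝ᵥ N.mulVec v') := by
  simp only [dotProduct, mulVec, kroneckerMap_apply, Fintype.sum_prod_type]
  rw [Finset.sum_mul_sum]
  refine Finset.sum_congr rfl fun i _ => Finset.sum_congr rfl fun j _ => ?_
  have h : (∑ i' : Fin d, ∑ j' : Fin d, M i i' * N j j' * (v i' * v' j'))
      = (∑ i' : Fin d, M i i' * v i') * (∑ j' : Fin d, N j j' * v' j') := by
    rw [Finset.sum_mul_sum]
    exact Finset.sum_congr rfl fun _ _ => Finset.sum_congr rfl fun _ _ => by ring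
  rw [h]; ring

private lemma pair_dot' {d : ℕ} (u u' v v' : Fin d → ℂ) :
    (fun p : Fin d × Fin d => u p.1 * u' p.2) ⬝ᵥ (fun p => v p.1 * v' p.2)
      = (u ⬝ᵥ v) * (u' ⬝ᵥ v') := by
  simp only [dotProduct, Fintype.sum_prod_type]
  rw [Finset.sum_mul_sum]
  exact Finset.sum_congr rfl fun _ _ => Finset.sum_congr rfl fun _ _ => by ring

private lemma sum_smul_mulVec' {n ι : Type*} [Fintype n] [Fintype ι] (c : ι → ℂ)
    (N : ι → Matrix n n ℂ) (v w : n → ℂ) :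
    v ⬝ᵥ (∑ K, c K • N K).mulVec w = ∑ K, c K * (v ⬝ᵥ (N K).mulVec w) := by
  have h : (∑ K, c K • N K).mulVec w = ∑ K, c K • ((N K).mulVec w) := by
    funext i
    simp only [mulVec, dotProduct, Finset.sum_apply, Matrix.sum_apply, Pi.smul_apply,
      Matrix.smul_apply, smul_eq_mul, Finset.sum_mul, Finset.mul_sum]
    rw [Finset.sum_comm]
    exact Finset.sum_congr rfl fun K _ => Finset.sum_congr rfl fun x _ => by ring
  rw [h, dot_sum']
  exact Finset.sum_congr rfl fun K _ => by rw [dotProduct_smul, smul_eq_mul]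

theorem ground_state_sign_structure {d m : ℕ}
    (A : Matrix (Fin d) (Fin d) ℂ) (B : Fin m → Matrix (Fin d) (Fin d) ℂ)
    (b : Fin m → ℝ)
    (hA : ∀ i j, (A i j).im = 0) (hBreal : ∀ k i j, (B k i j).im = 0)
    (hb : ∀ k, b k ≤ 0)
    (G : Matrix (Fin d × Fin d) (Fin d × Fin d) ℂ)
    (hG : G = (1 : Matrix (Fin d) (Fin d) ℂ) ⊗ₖ A + A ⊗ₖ 1
            + ∑ k, ((b k : ℂ)) • (B k ⊗ₖ B k))
    (hHerm : G.IsHermitian)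
    (ψ : Fin d × Fin d → ℂ) (hψunit : star ψ ⬝ᵥ ψ = 1)
    (hground : ∀ φ : Fin d × Fin d → ℂ, star φ ⬝ᵥ φ = 1 →
      (star ψ ⬝ᵥ G.mulVec ψ).re ≤ (star φ ⬝ᵥ G.mulVec φ).re)
    (hnondeg : ∀ φ : Fin d × Fin d → ℂ, star φ ⬝ᵥ φ = 1 →
      (star φ ⬝ᵥ G.mulVec φ).re = (star ψ ⬝ᵥ G.mulVec ψ).re → ∃ c : ℂ, φ = c • ψ)
    (l : Fin d → ℝ) (a : Fin d → Fin d → ℝ)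
    (hortho : ∀ k k', ∑ i, a k i * a k' i = if k = k' then 1 else 0)
    (hdecomp : ∀ p, ψ p = ∑ k, (l k : ℂ) * (a k p.1 : ℂ) * (a k p.2 : ℂ))
    (ψt : Fin d × Fin d → ℂ)
    (hψt : ∀ p, ψt p = ∑ k, ((|l k| : ℝ) : ℂ) * (a k p.1 : ℂ) * (a k p.2 : ℂ)) :
    (star ψt ⬝ᵥ G.mulVec ψt).re ≤ (star ψ ⬝ᵥ G.mulVec ψ).re ∧
      ∀ k k', 0 ≤ l k * l k' := by
  classical
  -- the real vectors
  set av : Fin d → Fin d → ℂ := fun k i => ((a k i : ℝ) : ℂ) with hav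
  set v : Fin d → Fin d × Fin d → ℂ := fun k p => av k p.1 * av k p.2 with hv
  -- coerced orthonormality
  have horthoC : ∀ k k', (av k) ⬝ᵥ (av k') = ((if k = k' then 1 else 0 : ℝ) : ℂ) := by
    intro k k'
    simp only [dotProduct, hav]
    rw [← hortho k k']
    push_cast
    rfl
  -- real entries
  have hAo : ∀ i j, A i j = (((A i j).re : ℝ) : ℂ) := by
    intro i j; exact (Complex.re_add_im (A i j) ▸ by rw [hA i j]; simp)
  have hBo : ∀ K i j, B K i j = (((B K i j).re : ℝ) : ℂ) := by
    intro K i j; exact (Complex.re_add_im (B K i j) ▸ by rw [hBreal K i j]; simp)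
  -- real matrix elements
  set dA : Fin d → Fin d → ℝ := fun k k' => ∑ i, ∑ j, a k i * (A i j).re * a k' j with hdA
  set dB : Fin m → Fin d → Fin d → ℝ :=
    fun K k k' => ∑ i, ∑ j, a k i * (B K i j).re * a k' j with hdB
  have hAdot : ∀ k k', (av k) ⬝ᵥ A.mulVec (av k') = ((dA k k' : ℝ) : ℂ) := by
    intro k k'
    simp only [dotProduct, mulVec, hdA, Complex.ofReal_sum, Finset.mul_sum]
    refine Finset.sum_congr rfl fun i _ => Finset.sum_congr rfl fun j _ => ?_
    rw [hAo i j]; push_cast [hav, Complex.ofReal_re]; ring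
  have hBdot : ∀ K k k', (av k) ⬝ᵥ (B K).mulVec (av k') = ((dB K k k' : ℝ) : ℂ) := by
    intro K k k'
    simp only [dotProduct, mulVec, hdB, Complex.ofReal_sum, Finset.mul_sum]
    refine Finset.sum_congr rfl fun i _ => Finset.sum_congr rfl fun j _ => ?_
    rw [hBo K i j]; push_cast [hav, Complex.ofReal_re]; ring
  -- energy matrix elements
  set eR : Fin d → Fin d → ℝ := fun k k' =>
    (if k = k' then 2 * dA k k' else 0) + ∑ K, b K * (dB K k k')^2 with heR
  have hE : ∀ k k', (v k) ⬝ᵥ G.mulVec (v k') = ((eR k k' : ℝ) : ℂ) := by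
    intro k k'
    rw [hG, Matrix.add_mulVec, Matrix.add_mulVec, dotProduct_add, dotProduct_add]
    rw [show (v k) = (fun p : Fin d × Fin d => av k p.1 * av k p.2) from rfl,
      show (v k') = (fun p : Fin d × Fin d => av k' p.1 * av k' p.2) from rfl]
    rw [kron_dot', kron_dot', sum_smul_mulVec']
    have h1 : (av k) ⬝ᵥ (1 : Matrix (Fin d) (Fin d) ℂ).mulVec (av k')
        = ((if k = k' then 1 else 0 : ℝ) : ℂ) := by
      rw [Matrix.one_mulVec, horthoC]
    have h2 : ∀ K, (fun p : Fin d × Fin d => av k p.1 * av k p.2) ⬝ᵥ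
        (B K ⊗ₖ B K).mulVec (fun p => av k' p.1 * av k' p.2)
        = ((dB K k k' : ℝ) : ℂ) * ((dB K k k' : ℝ) : ℂ) := by
      intro K; rw [kron_dot', hBdot]
    rw [h1, hAdot]
    simp only [h2]
    rw [heR]
    by_cases hkk : k = k'
    · simp only [hkk, if_true]
      push_cast
      ring
    · simp only [hkk, if_false]
      push_cast
      ring
  -- quadratic form for a general real combination
  have hquad : ∀ (μ : Fin d → ℝ) (φ : Fin d × Fin d → ℂ),
      (∀ p, φ p = ∑ k, ((μ k : ℝ) : ℂ) * (a k p.1 : ℂ) * (a k p.2 : ℂ)) →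
      star φ ⬝ᵥ G.mulVec φ = ((∑ k, ∑ k', μ k * μ k' * eR k k' : ℝ) : ℂ) := by
    intro μ φ hφ
    have hφ' : φ = fun p => ∑ k, ((μ k : ℝ) : ℂ) * v k p := by
      funext p; rw [hφ p]
      exact Finset.sum_congr rfl fun k _ => by rw [hv]; push_cast; ring
    have hstar : star φ = φ := by
      funext p
      rw [Pi.star_apply, hφ p, star_sum]
      push_cast
      refine Finset.sum_congr rfl fun k _ => ?_
      simp [← Complex.ofReal_mul]
    rw [hstar, hφ']
    rw [bilin']
    rw [Complex.ofReal_sum]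
    refine Finset.sum_congr rfl fun k _ => ?_
    rw [Complex.ofReal_sum]
    refine Finset.sum_congr rfl fun k' _ => ?_
    rw [hE k k']
    push_cast
    ring
  -- norm for a general real combination
  have hnorm : ∀ (μ : Fin d → ℝ) (φ : Fin d × Fin d → ℂ),
      (∀ p, φ p = ∑ k, ((μ k : ℝ) : ℂ) * (a k p.1 : ℂ) * (a k p.2 : ℂ)) →
      star φ ⬝ᵥ φ = ((∑ k, (μ k)^2 : ℝ) : ℂ) := by
    intro μ φ hφ
    have hφ' : φ = fun p => ∑ k, ((μ k : ℝ) : ℂ) * v k p := by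
      funext p; rw [hφ p]
      exact Finset.sum_congr rfl fun k _ => by rw [hv]; push_cast; ring
    have hstar : star φ = φ := by
      funext p
      rw [Pi.star_apply, hφ p, star_sum]
      push_cast
      refine Finset.sum_congr rfl fun k _ => ?_
      simp [← Complex.ofReal_mul]
    have h1 : star φ ⬝ᵥ φ = star φ ⬝ᵥ (1 : Matrix (Fin d × Fin d) (Fin d × Fin d) ℂ).mulVec φ := by
      rw [Matrix.one_mulVec]
    rw [h1, hstar, hφ', bilin']
    have h2 : ∀ k k' : Fin d, (v k) ⬝ᵥ (1 : Matrix (Fin d × Fin d) (Fin d × Fin d) ℂ).mulVec (v k')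
        = ((if k = k' then 1 else 0 : ℝ) : ℂ) := by
      intro k k'
      rw [Matrix.one_mulVec, hv]
      rw [show (fun (p : Fin d × Fin d) => av k p.1 * av k p.2) ⬝ᵥ
          (fun (p : Fin d × Fin d) => av k' p.1 * av k' p.2)
          = ((av k) ⬝ᵥ (av k')) * ((av k) ⬝ᵥ (av k')) from pair_dot' _ _ _ _, horthoC]
      by_cases hkk : k = k' <;> simp [hkk]
    rw [Complex.ofReal_sum]
    refine Finset.sum_congr rfl fun k _ => ?_
    rw [show (∑ k', ((μ k : ℝ) : ℂ) * (μ k' : ℂ) * ((v k) ⬝ᵥ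
        (1 : Matrix (Fin d × Fin d) (Fin d × Fin d) ℂ).mulVec (v k')))
        = ∑ k', ((μ k : ℝ) : ℂ) * (μ k' : ℂ) * ((if k = k' then 1 else 0 : ℝ) : ℂ) from
      Finset.sum_congr rfl fun k' _ => by rw [h2 k k']]
    rw [Finset.sum_eq_single k]
    · simp; push_cast; ring
    · intro k' _ hne; simp [Ne.symm hne]
    · intro h; exact absurd (Finset.mem_univ k) h
  -- quadratic forms of ψ and ψt
  have hQψ : star ψ ⬝ᵥ G.mulVec ψ = ((∑ k, ∑ k', l k * l k' * eR k k' : ℝ) : ℂ) :=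
    hquad l ψ hdecomp
  have hQψt : star ψt ⬝ᵥ G.mulVec ψt
      = ((∑ k, ∑ k', |l k| * |l k'| * eR k k' : ℝ) : ℂ) :=
    hquad (fun k => |l k|) ψt hψt
  -- energy inequality (real)
  have hineq : (∑ k, ∑ k', |l k| * |l k'| * eR k k') ≤ ∑ k, ∑ k', l k * l k' * eR k k' := by
    refine Finset.sum_le_sum fun k _ => Finset.sum_le_sum fun k' _ => ?_
    by_cases hkk : k = k'
    · subst hkk
      rw [abs_mul_abs_self]
    · have he : eR k k' ≤ 0 := by
        rw [heR]
        simp only [hkk, if_false, zero_add]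
        refine Finset.sum_nonpos fun K _ => mul_nonpos_of_nonpos_of_nonneg (hb K) (sq_nonneg _)
      have habs : l k * l k' ≤ |l k| * |l k'| := by
        rw [← abs_mul]; exact le_abs_self _
      exact mul_le_mul_of_nonpos_right habs he
  have hineqC : (star ψt ⬝ᵥ G.mulVec ψt).re ≤ (star ψ ⬝ᵥ G.mulVec ψ).re := by
    rw [hQψ, hQψt, Complex.ofReal_re, Complex.ofReal_re]
    exact hineq
  refine ⟨hineqC, ?_⟩
  -- ψt is a unit vector
  have hψnorm : ((∑ k, (l k)^2 : ℝ) : ℂ) = 1 := by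
    rw [← hnorm l ψ hdecomp]; exact hψunit
  have hψtunit : star ψt ⬝ᵥ ψt = 1 := by
    rw [hnorm (fun k => |l k|) ψt hψt]
    simpa [sq_abs] using hψnorm
  -- equality of energies
  have heq : (star ψt ⬝ᵥ G.mulVec ψt).re = (star ψ ⬝ᵥ G.mulVec ψ).re :=
    le_antisymm hineqC (hground ψt hψtunit)
  obtain ⟨c, hc⟩ := hnondeg ψt hψtunit heq
  -- extract coefficients: |l k| = c * l k
  have hcoef : ∀ k : Fin d, ((|l k| : ℝ) : ℂ) = c * ((l k : ℝ) : ℂ) := by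
    intro k
    have hdot : ∀ (μ : Fin d → ℝ) (φ : Fin d × Fin d → ℂ),
        (∀ p, φ p = ∑ k, ((μ k : ℝ) : ℂ) * (a k p.1 : ℂ) * (a k p.2 : ℂ)) →
        (v k) ⬝ᵥ φ = ((μ k : ℝ) : ℂ) := by
      intro μ φ hφ
      have hφ' : φ = ∑ k', ((μ k' : ℝ) : ℂ) • v k' := by
        funext p
        rw [hφ p, Finset.sum_apply]
        refine Finset.sum_congr rfl fun k' _ => ?_
        simp only [Pi.smul_apply, smul_eq_mul, hv, hav]
        push_cast; ring
      rw [hφ', dot_sum']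
      rw [show (∑ k', (v k) ⬝ᵥ (((μ k' : ℝ) : ℂ) • v k'))
          = ∑ k', ((μ k' : ℝ) : ℂ) * ((v k) ⬝ᵥ v k') from
        Finset.sum_congr rfl fun k' _ => by rw [dotProduct_smul, smul_eq_mul]]
      have h2 : ∀ k' : Fin d, (v k) ⬝ᵥ (v k') = ((if k = k' then 1 else 0 : ℝ) : ℂ) := by
        intro k'
        rw [hv, show (fun (p : Fin d × Fin d) => av k p.1 * av k p.2) ⬝ᵥ
            (fun (p : Fin d × Fin d) => av k' p.1 * av k' p.2)
            = ((av k) ⬝ᵥ (av k')) * ((av k) ⬝ᵥ (av k')) from pair_dot' _ _ _ _, horthoC]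
        by_cases hkk : k = k' <;> simp [hkk]
      simp only [h2]
      rw [Finset.sum_eq_single k]
      · simp
      · intro k' _ hne; simp [Ne.symm hne]
      · intro h; exact absurd (Finset.mem_univ k) h
    have ht : (v k) ⬝ᵥ ψt = ((|l k| : ℝ) : ℂ) := hdot (fun k => |l k|) ψt hψt
    have hp : (v k) ⬝ᵥ ψ = ((l k : ℝ) : ℂ) := hdot l ψ hdecomp
    rw [← ht, hc]
    rw [show (v k) ⬝ᵥ (c • ψ) = c * ((v k) ⬝ᵥ ψ) from by
      rw [dotProduct_smul, smul_eq_mul], hp]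
  -- conclude signs
  intro k k'
  rcases eq_or_ne (l k) 0 with hk | hk
  · simp [hk]
  rcases eq_or_ne (l k') 0 with hk' | hk'
  · simp [hk']
  have h1 : c.re * l k = |l k| ∧ c.im * l k = 0 := by
    have := hcoef k
    constructor
    · have := congrArg Complex.re this
      simpa [Complex.mul_re] using this.symm
    · have := congrArg Complex.im this
      simpa [Complex.mul_im] using this.symm
  have h2 : c.re * l k' = |l k'| := by
    have := congrArg Complex.re (hcoef k')
    simpa [Complex.mul_re] using this.symm
  have hpos : 0 < |l k| := abs_pos.mpr hk
  have hpos' : 0 < |l k'| := abs_pos.mpr hk'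
  nlinarith [h1.1, h2, mul_pos hpos hpos', sq_nonneg c.re, sq_nonneg (c.re * l k)]
end
end

section
/- The n×n matrix d with entries d_{ij} = 1/(ζ(i)+ζ(j)), where ζ(i) = c − i for a constant c > n (so that all ζ(i)+ζ(j) > 0), is positive definite. -/
open Matrix MeasureTheory Real Set Function Polynomial

noncomputable section

theorem cauchy_matrix_posdef {n : ℕ} (c : ℝ) (hc : (n : ℝ) < c) :
    (Matrix.of fun i j : Fin n =>
      1 / ((c - ((i : ℕ) + 1)) + (c - ((j : ℕ) + 1)))).PosDef := by
  set a : Fin n → ℝ := fun i => c - ((i : ℕ) + 1) - 1/2 with ha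
  clear_value a
  have ha_gt : ∀ i : Fin n, -(1/2 : ℝ) < a i := by
    intro i
    have hi : ((i : ℕ) : ℝ) + 1 ≤ (n : ℝ) := by
      exact_mod_cast Nat.succ_le_of_lt i.isLt
    simp only [ha]
    linarith
  have hsum : ∀ i j : Fin n, (-1 : ℝ) < a i + a j := by
    intro i j; have := ha_gt i; have := ha_gt j; linarith
  have hentry : ∀ i j : Fin n,
      (1 : ℝ) / ((c - ((i : ℕ) + 1)) + (c - ((j : ℕ) + 1))) = 1 / (a i + a j + 1) := by
    intro i j; simp only [ha]; ring_nf
  have hint : ∀ i j : Fin n,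
      ∫ t in (0:ℝ)..1, t ^ (a i + a j) = 1 / (a i + a j + 1) := by
    intro i j
    rw [integral_rpow (Or.inl (hsum i j))]
    rw [Real.zero_rpow (by linarith [hsum i j]), Real.one_rpow]
    ring
  have hii : ∀ (x : Fin n → ℝ) (i j : Fin n), IntervalIntegrable
      (fun t : ℝ => (x i * x j) * t ^ (a i + a j)) volume 0 1 :=
    fun x i j => (intervalIntegral.intervalIntegrable_rpow' (hsum i j)).const_mul _
  have heqOn : ∀ (x : Fin n → ℝ), ∀ t ∈ Ioc (0:ℝ) 1,
      (∑ i, ∑ j, (x i * x j) * t ^ (a i + a j)) = (∑ i, x i * t ^ a i)^2 := by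
    intro x t ht
    rw [sq, Finset.sum_mul_sum]
    refine Finset.sum_congr rfl fun i _ => Finset.sum_congr rfl fun j _ => ?_
    rw [Real.rpow_add ht.1]; ring
  have key : ∀ x : Fin n → ℝ,
      x ⬝ᵥ ((Matrix.of fun i j : Fin n =>
        1 / ((c - ((i : ℕ) + 1)) + (c - ((j : ℕ) + 1)))) *ᵥ x)
      = ∫ t in (0:ℝ)..1, (∑ i, x i * t ^ a i)^2 := by
    intro x
    have h1 : x ⬝ᵥ ((Matrix.of fun i j : Fin n =>
        1 / ((c - ((i : ℕ) + 1)) + (c - ((j : ℕ) + 1)))) *ᵥ x)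
        = ∑ i, ∑ j, ∫ t in (0:ℝ)..1, (x i * x j) * t ^ (a i + a j) := by
      simp only [dotProduct, mulVec, Matrix.of_apply, Finset.mul_sum]
      refine Finset.sum_congr rfl fun i _ => Finset.sum_congr rfl fun j _ => ?_
      rw [intervalIntegral.integral_const_mul, hint i j, hentry i j]
      ring
    rw [h1]
    have h2 : ∑ i, ∑ j, (∫ t in (0:ℝ)..1, (x i * x j) * t ^ (a i + a j))
        = ∫ t in (0:ℝ)..1, ∑ i, ∑ j, (x i * x j) * t ^ (a i + a j) := by
      calc ∑ i, ∑ j, (∫ t in (0:ℝ)..1, (x i * x j) * t ^ (a i + a j))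
          = ∑ i, ∫ t in (0:ℝ)..1, ∑ j, (x i * x j) * t ^ (a i + a j) :=
            Finset.sum_congr rfl fun i _ =>
              (intervalIntegral.integral_finset_sum fun j _ => hii x i j).symm
        _ = ∫ t in (0:ℝ)..1, ∑ i, ∑ j, (x i * x j) * t ^ (a i + a j) :=
            (intervalIntegral.integral_finset_sum fun i _ => by
              have h0 : (fun t : ℝ => ∑ j, (x i * x j) * t ^ (a i + a j))
                  = ∑ j : Fin n, fun t : ℝ => (x i * x j) * t ^ (a i + a j) := by
                funext t; simp
              rw [h0]
              exact IntervalIntegrable.sum _ fun j _ => hii x i j).symm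
    rw [h2]
    rw [intervalIntegral.integral_of_le (by norm_num : (0:ℝ) ≤ 1),
        intervalIntegral.integral_of_le (by norm_num : (0:ℝ) ≤ 1)]
    exact setIntegral_congr_fun measurableSet_Ioc (heqOn x)
  rw [Matrix.posDef_iff_dotProduct_mulVec]
  constructor
  · -- Hermitian
    ext i j
    simp only [Matrix.conjTranspose_apply, Matrix.of_apply, star_trivial]
    ring_nf
  · intro x hx
    have hxs : star x = x := by
      funext i; exact star_trivial _
    rw [hxs, key x]
    -- integrability of the square
    have hg : IntervalIntegrable
        (fun t : ℝ => ∑ i, ∑ j, (x i * x j) * t ^ (a i + a j)) volume 0 1 := by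
      have h0 : (fun t : ℝ => ∑ i, ∑ j, (x i * x j) * t ^ (a i + a j))
          = ∑ i : Fin n, ∑ j : Fin n, fun t : ℝ => (x i * x j) * t ^ (a i + a j) := by
        funext t; simp
      rw [h0]
      exact IntervalIntegrable.sum _ fun i _ => IntervalIntegrable.sum _ fun j _ => hii x i j
    have hfi : IntervalIntegrable
        (fun t : ℝ => (∑ i, x i * t ^ a i)^2) volume 0 1 := by
      constructor
      · exact hg.1.congr_fun (heqOn x) measurableSet_Ioc
      · rw [Set.Ioc_eq_empty (by norm_num)]
        exact integrableOn_empty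
    rw [intervalIntegral.integral_pos_iff_support_of_nonneg_ae
      (Filter.Eventually.of_forall fun t => sq_nonneg _) hfi]
    refine ⟨zero_lt_one, ?_⟩
    -- polynomial
    obtain ⟨i₀, hi₀⟩ := Function.ne_iff.mp hx
    simp only [Pi.zero_apply] at hi₀
    set P : Polynomial ℝ := ∑ i : Fin n, Polynomial.C (x i) * Polynomial.X ^ (n - 1 - (i : ℕ))
      with hP
    have hPcoeff : P.coeff (n - 1 - (i₀ : ℕ)) = x i₀ := by
      rw [hP, Polynomial.finset_sum_coeff]
      rw [Finset.sum_eq_single i₀]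
      · simp
      · intro i _ hne
        have h1 : (i : ℕ) < n := i.isLt
        have h2 : (i₀ : ℕ) < n := i₀.isLt
        have h3 : (i : ℕ) ≠ (i₀ : ℕ) := fun h => hne (Fin.ext h)
        simp only [Polynomial.coeff_C_mul, Polynomial.coeff_X_pow]
        rw [if_neg (by omega)]
        ring
      · simp
    have hPne : P ≠ 0 := fun h => hi₀ (by rw [← hPcoeff, h, Polynomial.coeff_zero])
    have hfin : ({t : ℝ | P.IsRoot t}).Finite := P.finite_setOf_isRoot hPne
    have hR0 : volume {t : ℝ | P.IsRoot t} = 0 := hfin.measure_zero _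
    set b : ℝ := c - n - 1/2 with hb
    clear_value b
    have hfactor : ∀ t ∈ Ioc (0:ℝ) 1, (∑ i, x i * t ^ a i) = t ^ b * P.eval t := by
      intro t ht
      rw [hP]
      rw [Polynomial.eval_finset_sum]
      rw [Finset.mul_sum]
      refine Finset.sum_congr rfl fun i _ => ?_
      have h1 : (i : ℕ) < n := i.isLt
      have hcast : ((n - 1 - (i : ℕ) : ℕ) : ℝ) = (n : ℝ) - 1 - (i : ℕ) := by
        have : n - 1 - (i : ℕ) = n - (1 + (i:ℕ)) := by omega
        rw [this, Nat.cast_sub (by omega)]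
        push_cast; ring
      have hai : a i = b + ((n - 1 - (i : ℕ) : ℕ) : ℝ) := by
        rw [hcast, ha, hb]; ring
      rw [hai, Real.rpow_add ht.1, Real.rpow_natCast]
      simp only [Polynomial.eval_mul, Polynomial.eval_C, Polynomial.eval_pow,
        Polynomial.eval_X]
      ring
    have hsub : Ioc (0:ℝ) 1 \ {t : ℝ | P.IsRoot t} ⊆
        support (fun t : ℝ => (∑ i, x i * t ^ a i)^2) ∩ Ioc 0 1 := by
      intro t ⟨ht, htr⟩
      refine ⟨?_, ht⟩
      simp only [mem_support]
      rw [hfactor t ht]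
      have h1 : t ^ b ≠ 0 := (Real.rpow_pos_of_pos ht.1 b).ne'
      have h2 : P.eval t ≠ 0 := htr
      positivity
    calc (0 : ENNReal) < volume (Ioc (0:ℝ) 1 \ {t : ℝ | P.IsRoot t}) := by
          rw [measure_diff_null hR0, Real.volume_Ioc]
          norm_num
      _ ≤ _ := measure_mono hsub
end
end

section
/- For distinct positive reals ζ(1),...,ζ(n) and any x ∈ ℂ^n, one has Σ_{i,j} x̄_i x_j / (ζ(i)+ζ(j)) = ∫₀¹ t^{-1} |Σ_i x_i t^{ζ(i)}|² dt ≥ 0, with equality if and only if x = 0. -/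
open MeasureTheory

noncomputable section

private lemma rpow_intOn (a : ℝ) (ha : 0 < a) :
    IntegrableOn (fun t : ℝ => t ^ (a - 1)) (Set.Ioo 0 1) := by
  have h := intervalIntegral.intervalIntegrable_rpow' (a := 0) (b := 1) (r := a - 1)
    (by linarith)
  exact ((intervalIntegrable_iff_integrableOn_Ioc_of_le zero_le_one).mp h).mono_set
    Set.Ioo_subset_Ioc_self

private lemma rpow_intVal (a : ℝ) (ha : 0 < a) :
    ∫ t in Set.Ioo (0:ℝ) 1, t ^ (a - 1) = 1 / a := by
  rw [← MeasureTheory.integral_Ioc_eq_integral_Ioo,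
    ← intervalIntegral.integral_of_le zero_le_one,
    integral_rpow (Or.inl (by linarith))]
  rw [sub_add_cancel, Real.one_rpow, Real.zero_rpow ha.ne']
  ring

private lemma indep_rpow {n : ℕ} (ζ : Fin n → ℝ)
    (hpos : ∀ i, 0 < ζ i) (hinj : Function.Injective ζ)
    (x : Fin n → ℂ)
    (hz : ∀ t ∈ Set.Icc (0:ℝ) 1, ∑ i, x i * ((t ^ (ζ i) : ℝ) : ℂ) = 0) : x = 0 := by
  classical
  set S : Submonoid ℝ :=
    { carrier := Set.Icc 0 1
      mul_mem' := fun {a b} ha hb =>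
        ⟨mul_nonneg ha.1 hb.1, mul_le_one₀ ha.2 hb.1 hb.2⟩
      one_mem' := ⟨zero_le_one, le_refl 1⟩ } with hS
  have hmem : ∀ s : S, (s : ℝ) ∈ Set.Icc (0:ℝ) 1 := fun s => s.2
  let φ : Fin n → (S →* ℂ) := fun i =>
    { toFun := fun s => (((s : ℝ) ^ ζ i : ℝ) : ℂ)
      map_one' := by
        simp [Real.one_rpow]
      map_mul' := fun s t => by
        simp only [Submonoid.coe_mul]
        rw [Real.mul_rpow (hmem s).1 (hmem t).1, Complex.ofReal_mul] }
  have hφinj : Function.Injective φ := by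
    intro i j hij
    have h2 : ((1:ℝ)/2) ∈ Set.Icc (0:ℝ) 1 := by norm_num
    have := congrArg (fun f : S →* ℂ => f ⟨1/2, h2⟩) hij
    simp only [φ, MonoidHom.coe_mk, OneHom.coe_mk] at this
    have hr : ((1:ℝ)/2) ^ ζ i = ((1:ℝ)/2) ^ ζ j := by exact_mod_cast this
    have hl := congrArg Real.log hr
    rw [Real.log_rpow (by norm_num), Real.log_rpow (by norm_num)] at hl
    have hlog : Real.log (1/2) ≠ 0 := by
      simp only [ne_eq, Real.log_eq_zero]
      push_neg
      norm_num
    exact hinj (mul_right_cancel₀ hlog hl)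
  have li : LinearIndependent ℂ (fun i => ((φ i : S → ℂ))) :=
    (linearIndependent_monoidHom S ℂ).comp φ hφinj
  have hsum0 : ∑ i, x i • ((φ i : S → ℂ)) = 0 := by
    funext s
    simp only [Finset.sum_apply, Pi.smul_apply, smul_eq_mul, Pi.zero_apply]
    exact hz (s : ℝ) (hmem s)
  funext i
  exact Fintype.linearIndependent_iff.mp li x hsum0 i

theorem cauchy_quadratic_form_integral {n : ℕ} (ζ : Fin n → ℝ)
    (hpos : ∀ i, 0 < ζ i) (hinj : Function.Injective ζ)
    (x : Fin n → ℂ) :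
    (∑ i, ∑ j, (starRingEnd ℂ) (x i) * x j / (((ζ i + ζ j : ℝ)) : ℂ))
        = (((∫ t in Set.Ioo (0:ℝ) 1,
            (‖∑ i, x i * ((t ^ (ζ i) : ℝ) : ℂ)‖) ^ 2 / t) : ℝ) : ℂ) ∧
      0 ≤ ∫ t in Set.Ioo (0:ℝ) 1,
            (‖∑ i, x i * ((t ^ (ζ i) : ℝ) : ℂ)‖) ^ 2 / t ∧
      ((∑ i, ∑ j, (starRingEnd ℂ) (x i) * x j / (((ζ i + ζ j : ℝ)) : ℂ)) = 0
        ↔ x = 0) := by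
  classical
  set f : ℝ → ℂ := fun t => ∑ i, x i * ((t ^ (ζ i) : ℝ) : ℂ) with hf
  set g : ℝ → ℝ := fun t => (‖f t‖) ^ 2 / t with hg
  set F : ℝ → ℂ := fun t =>
    ∑ i, ∑ j, (starRingEnd ℂ) (x i) * x j * ((t ^ (ζ i + ζ j - 1) : ℝ) : ℂ) with hF
  have hapos : ∀ i j : Fin n, (0:ℝ) < ζ i + ζ j := fun i j => by
    have := hpos i; have := hpos j; linarith
  -- integrability of each term of F
  have hterm_int : ∀ i j : Fin n, IntegrableOn
      (fun t : ℝ => (starRingEnd ℂ) (x i) * x j * ((t ^ (ζ i + ζ j - 1) : ℝ) : ℂ))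
      (Set.Ioo 0 1) := fun i j =>
    ((rpow_intOn _ (hapos i j)).ofReal.const_mul _)
  have hF_int : IntegrableOn F (Set.Ioo 0 1) := by
    apply MeasureTheory.integrable_finset_sum
    intro i _
    exact MeasureTheory.integrable_finset_sum _ (fun j _ => hterm_int i j)
  -- ∫ F = the double sum
  have hintF : ∫ t in Set.Ioo (0:ℝ) 1, F t
      = ∑ i, ∑ j, (starRingEnd ℂ) (x i) * x j / (((ζ i + ζ j : ℝ)) : ℂ) := by
    rw [MeasureTheory.integral_finset_sum _
      (fun i _ => MeasureTheory.integrable_finset_sum _ (fun j _ => hterm_int i j))]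
    refine Finset.sum_congr rfl (fun i _ => ?_)
    rw [MeasureTheory.integral_finset_sum _ (fun j _ => hterm_int i j)]
    refine Finset.sum_congr rfl (fun j _ => ?_)
    have hcast : (∫ (a:ℝ) in Set.Ioo 0 1, ((a ^ (ζ i + ζ j - 1) : ℝ) : ℂ))
        = (((1/(ζ i + ζ j) : ℝ)) : ℂ) := by
      rw [← rpow_intVal _ (hapos i j)]
      exact integral_ofReal
    rw [MeasureTheory.integral_const_mul, hcast]
    push_cast
    rw [mul_one_div]
  -- pointwise: cast of g equals F on Ioo
  have hEq : Set.EqOn (fun t : ℝ => ((g t : ℝ) : ℂ)) F (Set.Ioo 0 1) := by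
    intro t ht
    have ht0 : (0:ℝ) < t := ht.1
    simp only [hg, hF]
    rw [Complex.ofReal_div, Complex.sq_norm, Complex.normSq_eq_conj_mul_self]
    have hconj : (starRingEnd ℂ) (f t) = ∑ i, (starRingEnd ℂ) (x i) * ((t ^ (ζ i) : ℝ) : ℂ) := by
      rw [hf]
      rw [map_sum]
      refine Finset.sum_congr rfl (fun i _ => ?_)
      rw [map_mul, Complex.conj_ofReal]
    rw [hconj, hf]
    rw [Finset.sum_mul_sum]
    rw [Finset.sum_div]
    refine Finset.sum_congr rfl (fun i _ => ?_)
    rw [Finset.sum_div]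
    refine Finset.sum_congr rfl (fun j _ => ?_)
    have hreal : t ^ (ζ i + ζ j - 1) = t ^ ζ i * t ^ ζ j / t := by
      rw [Real.rpow_sub ht0, Real.rpow_add ht0, Real.rpow_one]
    rw [hreal, Complex.ofReal_div, Complex.ofReal_mul]
    ring
  -- part 1
  have h1 : (∑ i, ∑ j, (starRingEnd ℂ) (x i) * x j / (((ζ i + ζ j : ℝ)) : ℂ))
      = (((∫ t in Set.Ioo (0:ℝ) 1, g t) : ℝ) : ℂ) := by
    have hcast : ((∫ t in Set.Ioo (0:ℝ) 1, g t : ℝ) : ℂ)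
        = ∫ t in Set.Ioo (0:ℝ) 1, ((g t : ℝ) : ℂ) := integral_ofReal.symm
    rw [← hintF, hcast]
    exact (MeasureTheory.setIntegral_congr_fun measurableSet_Ioo hEq).symm
  -- part 2
  have h2 : 0 ≤ ∫ t in Set.Ioo (0:ℝ) 1, g t := by
    apply MeasureTheory.setIntegral_nonneg measurableSet_Ioo
    intro t ht
    exact div_nonneg (sq_nonneg _) ht.1.le
  refine ⟨h1, h2, ?_, ?_⟩
  · -- sum = 0 → x = 0
    intro hzero
    have hreal : ∫ t in Set.Ioo (0:ℝ) 1, g t = 0 := by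
      have := h1 ▸ hzero
      exact_mod_cast this
    -- g integrable on Ioo
    have hg_int : IntegrableOn g (Set.Ioo 0 1) := by
      have hFre : IntegrableOn (fun t => (F t).re) (Set.Ioo 0 1) := hF_int.re
      apply hFre.congr_fun _ measurableSet_Ioo
      intro t ht
      have h := hEq ht
      simp only at h
      show (F t).re = g t
      rw [← h, Complex.ofReal_re]
    have hg_nonneg : 0 ≤ᵐ[volume.restrict (Set.Ioo (0:ℝ) 1)] g := by
      refine (MeasureTheory.ae_restrict_iff' measurableSet_Ioo).mpr ?_
      filter_upwards with t ht
      exact div_nonneg (sq_nonneg _) ht.1.le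
    have hg0 : g =ᵐ[volume.restrict (Set.Ioo (0:ℝ) 1)] 0 :=
      (MeasureTheory.integral_eq_zero_iff_of_nonneg_ae hg_nonneg hg_int).mp hreal
    have hf0 : f =ᵐ[volume.restrict (Set.Ioo (0:ℝ) 1)] 0 := by
      have hmem : ∀ᵐ t ∂(volume.restrict (Set.Ioo (0:ℝ) 1)), t ∈ Set.Ioo (0:ℝ) 1 :=
        MeasureTheory.ae_restrict_mem measurableSet_Ioo
      filter_upwards [hg0, hmem] with t hgt hmt
      have : (‖f t‖) ^ 2 / t = 0 := hgt
      have habs : (‖f t‖) ^ 2 = 0 := by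
        rcases div_eq_zero_iff.mp this with h | h
        · exact h
        · exact absurd h hmt.1.ne'
      have : ‖f t‖ = 0 := by
        exact pow_eq_zero_iff (by norm_num) |>.mp habs
      simpa using this
    have hf_cont : Continuous f := by
      apply continuous_finset_sum
      intro i _
      apply Continuous.mul continuous_const
      apply Complex.continuous_ofReal.comp
      rw [continuous_iff_continuousAt]
      intro t
      exact Real.continuousAt_rpow_const t (ζ i) (Or.inr (hpos i).le)
    have hEqOn : Set.EqOn f 0 (Set.Ioo (0:ℝ) 1) := by
      apply MeasureTheory.Measure.eqOn_of_ae_eq hf0 hf_cont.continuousOn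
        continuousOn_const
      rw [interior_Ioo]
      exact subset_closure
    have hEqIcc : Set.EqOn f 0 (Set.Icc (0:ℝ) 1) := by
      have := hEqOn.closure hf_cont continuous_const
      rwa [closure_Ioo (by norm_num : (0:ℝ) ≠ 1)] at this
    exact indep_rpow ζ hpos hinj x (fun t ht => hEqIcc ht)
  · intro hx
    subst hx
    simp
end
end

section
/- Let f(x) = −log(1−x) applied entrywise. For real symmetric matrices A, B with entries in (−1,1), if 0 ≤ A ≤ B (in the positive semidefinite order) then f[A] ≤ f[B], where f[M] denotes the entrywise application of f. -/
open Matrix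

noncomputable section

variable {n : ℕ}

lemma quad_eq (M : Matrix (Fin n) (Fin n) ℝ) (x : Fin n → ℝ) :
    x ⬝ᵥ M *ᵥ x = ∑ i, ∑ j, x i * M i j * x j := by
  simp [dotProduct, mulVec, Finset.mul_sum, mul_assoc]

lemma schur_psd {A B : Matrix (Fin n) (Fin n) ℝ} (hA : A.PosSemidef) (hB : B.PosSemidef) :
    (Matrix.of fun i j => A i j * B i j).PosSemidef := by
  obtain ⟨C, hC⟩ : ∃ C : Matrix (Fin n) (Fin n) ℝ, A = Cᴴ * C := by
    open scoped MatrixOrder in exact CStarAlgebra.nonneg_iff_eq_star_mul_self.mp hA.nonneg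
  refine PosSemidef.of_dotProduct_mulVec_nonneg ?_ fun x => ?_
  · ext i j
    simp only [conjTranspose_apply, of_apply, star_trivial]
    rw [← hA.1.apply i j, ← hB.1.apply i j]
    simp
  · simp only [star_trivial, quad_eq]
    have hAentry : ∀ i j, A i j = ∑ k, C k i * C k j := by
      intro i j; rw [hC]; simp [mul_apply, conjTranspose_apply]
    have key : ∀ i j, x i * (Matrix.of (fun i j => A i j * B i j) i j) * x j
        = ∑ k, (C k i * x i) * B i j * (C k j * x j) := by
      intro i j
      simp only [of_apply, hAentry, Finset.sum_mul, Finset.mul_sum]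
      exact Finset.sum_congr rfl fun k _ => by ring
    have swap1 : ∀ i : Fin n, ∑ j, ∑ k, (C k i * x i) * B i j * (C k j * x j)
        = ∑ k, ∑ j, (C k i * x i) * B i j * (C k j * x j) := fun i => Finset.sum_comm
    have : ∑ i, ∑ j, x i * (Matrix.of (fun i j => A i j * B i j) i j) * x j
        = ∑ k, ∑ i, ∑ j, (C k i * x i) * B i j * (C k j * x j) := by
      simp_rw [key, swap1]
      exact Finset.sum_comm
    rw [this]
    refine Finset.sum_nonneg fun k _ => ?_
    have := hB.dotProduct_mulVec_nonneg fun i => C k i * x i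
    rwa [star_trivial, quad_eq] at this

lemma hadPow_psd {A : Matrix (Fin n) (Fin n) ℝ} (hA : A.PosSemidef) (k : ℕ) :
    (Matrix.of fun i j => (A i j) ^ (k + 1)).PosSemidef := by
  induction k with
  | zero => simp only [zero_add, pow_one]; exact hA
  | succ k ih =>
    have h := schur_psd hA ih
    have e : (Matrix.of fun i j => (A i j) ^ (k + 1 + 1))
        = Matrix.of fun i j => A i j * (Matrix.of (fun i j => (A i j) ^ (k + 1)) i j) := by
      ext i j; simp only [of_apply]; ring
    rw [e]; exact h

lemma diffPow_psd {A B : Matrix (Fin n) (Fin n) ℝ} (hA : A.PosSemidef)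
    (hBA : (B - A).PosSemidef) (k : ℕ) :
    (Matrix.of fun i j => (B i j) ^ (k + 1) - (A i j) ^ (k + 1)).PosSemidef := by
  induction k with
  | zero => simp only [zero_add, pow_one]; exact hBA
  | succ k ih =>
    have hB : B.PosSemidef := by simpa using hBA.add hA
    have h1 := schur_psd hB ih
    have h2 := schur_psd hBA (hadPow_psd hA k)
    have h := h1.add h2
    have e : (Matrix.of fun i j => (B i j) ^ (k + 1 + 1) - (A i j) ^ (k + 1 + 1))
        = (Matrix.of fun i j => B i j *
            (Matrix.of (fun i j => (B i j) ^ (k + 1) - (A i j) ^ (k + 1)) i j))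
          + Matrix.of fun i j => (B - A) i j *
            (Matrix.of (fun i j => (A i j) ^ (k + 1)) i j) := by
      ext i j
      simp only [Matrix.add_apply, Matrix.sub_apply, of_apply]
      ring
    rw [e]; exact h

theorem entrywise_log_schur_monotone {n : ℕ}
    (A B : Matrix (Fin n) (Fin n) ℝ)
    (hAsym : A.IsSymm) (hBsym : B.IsSymm)
    (hAent : ∀ i j, A i j ∈ Set.Ioo (-1 : ℝ) 1)
    (hBent : ∀ i j, B i j ∈ Set.Ioo (-1 : ℝ) 1)
    (hA : A.PosSemidef) (hBA : (B - A).PosSemidef) :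
    ((Matrix.of fun i j => -Real.log (1 - B i j))
      - (Matrix.of fun i j => -Real.log (1 - A i j))).PosSemidef := by
  have hAij : ∀ i j, A j i = A i j := fun i j => by
    conv_lhs => rw [← hAsym]
    rfl
  have hBij : ∀ i j, B j i = B i j := fun i j => by
    conv_lhs => rw [← hBsym]
    rfl
  refine PosSemidef.of_dotProduct_mulVec_nonneg ?_ fun x => ?_
  · ext i j
    simp [conjTranspose_apply, Matrix.sub_apply, hAij i j, hBij i j]
  · simp only [star_trivial, quad_eq]
    have hsum : ∀ i j, HasSum
        (fun m : ℕ => x i * ((B i j) ^ (m+1) / (m+1) - (A i j) ^ (m+1) / (m+1)) * x j)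
        (x i * (((Matrix.of fun i j => -Real.log (1 - B i j))
          - (Matrix.of fun i j => -Real.log (1 - A i j))) i j) * x j) := by
      intro i j
      have hB' := Real.hasSum_pow_div_log_of_abs_lt_one
        (abs_lt.mpr ⟨(hBent i j).1, (hBent i j).2⟩)
      have hA' := Real.hasSum_pow_div_log_of_abs_lt_one
        (abs_lt.mpr ⟨(hAent i j).1, (hAent i j).2⟩)
      have := ((hB'.sub hA').mul_left (x i)).mul_right (x j)
      simpa [Matrix.sub_apply] using this
    have hS : HasSum
        (fun m : ℕ => ∑ i, ∑ j, x i * ((B i j) ^ (m+1) / (m+1) - (A i j) ^ (m+1) / (m+1)) * x j)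
        (∑ i, ∑ j, x i * (((Matrix.of fun i j => -Real.log (1 - B i j))
          - (Matrix.of fun i j => -Real.log (1 - A i j))) i j) * x j) :=
      hasSum_sum fun i _ => hasSum_sum fun j _ => hsum i j
    refine hS.nonneg fun m => ?_
    have hq := (diffPow_psd hA hBA m).dotProduct_mulVec_nonneg x
    rw [star_trivial, quad_eq] at hq
    have : (∑ i, ∑ j, x i * ((B i j) ^ (m+1) / (m+1) - (A i j) ^ (m+1) / (m+1)) * x j)
        = (∑ i, ∑ j, x i * (Matrix.of (fun i j => (B i j)^(m+1) - (A i j)^(m+1)) i j) * x j)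
          / (m+1) := by
      rw [Finset.sum_div]
      refine Finset.sum_congr rfl fun i _ => ?_
      rw [Finset.sum_div]
      refine Finset.sum_congr rfl fun j _ => ?_
      simp [of_apply, div_sub_div_same]
      ring
    rw [this]
    positivity
end
end

section
/- Let d be the n×n matrix with entries d_{ij} = 1/(ζ(i)+ζ(j)) with ζ(i) = (N+1)/2 − i for N > 2n (so all entries are in (0,1) when suitably scaled). Then there exists τ > 0 such that log[d] + τE is positive semidefinite, where log[·] is applied entrywise and E is the all-ones matrix. -/
open Matrix MeasureTheory Set Filter intervalIntegral

set_option maxHeartbeats 1000000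

noncomputable section
namespace ELRC

-- Polynomial nonvanishing lemma
lemma poly_exists_pt {n : ℕ} (x : Fin n → ℝ) (hx : x ≠ 0) :
    ∃ t : ℝ, t ∈ Set.Ioo (0:ℝ) 1 ∧ (∑ i : Fin n, x i * t ^ (n - 1 - (i:ℕ))) ≠ 0 := by
  set p : Polynomial ℝ := ∑ i : Fin n, Polynomial.C (x i) * Polynomial.X ^ (n - 1 - (i:ℕ)) with hp
  have hpne : p ≠ 0 := by
    intro h
    apply hx
    funext i
    have h2 := congrArg (fun q => Polynomial.coeff q (n - 1 - (i:ℕ))) h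
    simp only [hp, Polynomial.finset_sum_coeff, Polynomial.coeff_C_mul,
      Polynomial.coeff_X_pow, Polynomial.coeff_zero, mul_ite, mul_one, mul_zero] at h2
    rw [Finset.sum_eq_single i] at h2
    · simpa using h2
    · intro j _ hji
      rw [if_neg]
      intro hEq
      exact hji (by
        have hi := i.isLt
        have hj := j.isLt
        exact Fin.ext (by omega))
    · simp
  have hfin := Polynomial.finite_setOf_isRoot hpne
  have hinf : (Set.Ioo (0:ℝ) 1).Infinite := Set.Ioo_infinite (by norm_num)
  obtain ⟨t, ht⟩ := (hinf.diff hfin).nonempty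
  refine ⟨t, ht.1, ?_⟩
  have : ¬ p.IsRoot t := ht.2
  rw [Polynomial.IsRoot] at this
  intro hF
  apply this
  rw [hp]
  simpa [Polynomial.eval_finset_sum] using hF


lemma mul_double_sum {n : ℕ} (a : ℝ) (f : Fin n → Fin n → ℝ) :
    ∑ i : Fin n, ∑ j : Fin n, a * f i j = a * ∑ i : Fin n, ∑ j : Fin n, f i j := by
  rw [Finset.mul_sum]
  exact Finset.sum_congr rfl fun i _ => (Finset.mul_sum _ _ _).symm

lemma key (n N : ℕ) (hN : 2 * n < N) (x : Fin n → ℝ) (hsum : ∑ i, x i = 0) (hx : x ≠ 0) :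
    0 < ∑ i : Fin n, ∑ j : Fin n, x i * x j * (- Real.log ((N:ℝ) - 1 - (i:ℕ) - (j:ℕ))) := by
  classical
  have hn : 0 < n := by
    rcases Nat.eq_zero_or_pos n with h | h
    · subst h; exact absurd (funext fun i => i.elim0) hx
    · exact h
  set s : Fin n → Fin n → ℝ := fun i j => (N:ℝ) - 1 - (i:ℕ) - (j:ℕ) with hs
  have hcastle : ∀ i : Fin n, (i:ℝ) ≤ (n:ℝ) - 1 := by
    intro i
    have := i.isLt
    have : (i:ℕ) ≤ n - 1 := by omega
    calc (i:ℝ) ≤ ((n-1 : ℕ):ℝ) := by exact_mod_cast this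
    _ = (n:ℝ) - 1 := by push_cast [hn]; ring
  have hs2 : ∀ i j, 2 ≤ s i j := by
    intro i j
    have hi := hcastle i
    have hj := hcastle j
    have hNn : (2*n : ℝ) + 1 ≤ N := by exact_mod_cast hN
    simp only [hs]
    push_cast at hNn ⊢
    linarith
  set c : ℝ := (N:ℝ) - 2*n with hc
  have hc1 : 1 ≤ c := by
    have hNn : (2*n : ℝ) + 1 ≤ N := by exact_mod_cast hN
    simp only [hc]; linarith
  set F : ℝ → ℝ := fun t => ∑ i : Fin n, x i * t ^ (n - 1 - (i:ℕ)) with hF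
  set q : ℝ → ℝ := fun r => ∑ i : Fin n, ∑ j : Fin n, x i * x j * (s i j + r)⁻¹ with hq
  set φ : ℝ → ℝ := fun r => ∑ i : Fin n, ∑ j : Fin n, x i * x j * Real.log (s i j + r) with hφ
  have hkcast : ∀ i : Fin n, ((n - 1 - (i:ℕ) : ℕ) : ℝ) = (n:ℝ) - 1 - (i:ℕ) := by
    intro i
    have h1 : (i:ℕ) ≤ n - 1 := by have := i.isLt; omega
    push_cast [Nat.cast_sub h1, Nat.cast_sub (by omega : 1 ≤ n)]
    ring
  -- pointwise identity
  have hpt : ∀ r : ℝ, 0 ≤ r → ∀ t ∈ Set.Icc (0:ℝ) 1,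
      (∑ i : Fin n, ∑ j : Fin n, x i * x j * t ^ (r + s i j - 1))
        = t ^ (r + c) * (F t)^2 := by
    intro r hr t ht
    have hterm : ∀ i j : Fin n,
        x i * x j * t ^ (r + s i j - 1)
          = t ^ (r + c) * ((x i * t ^ (n - 1 - (i:ℕ))) * (x j * t ^ (n - 1 - (j:ℕ)))) := by
      intro i j
      have hexp : r + s i j - 1 = (r + c) + (((n - 1 - (i:ℕ) : ℕ):ℝ) + ((n - 1 - (j:ℕ) : ℕ):ℝ)) := by
        rw [hkcast i, hkcast j]
        simp only [hs, hc]
        push_cast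
        ring
      rcases eq_or_lt_of_le ht.1 with h0 | h0
      · -- t = 0
        rw [← h0]
        have h1 : r + s i j - 1 ≠ 0 := by have := hs2 i j; intro h; linarith
        have h2 : r + c ≠ 0 := by intro h; linarith
        rw [Real.zero_rpow h1, Real.zero_rpow h2]
        ring
      · -- t > 0
        rw [hexp]
        simp only [Real.rpow_add h0, Real.rpow_natCast]
        ring
    calc (∑ i : Fin n, ∑ j : Fin n, x i * x j * t ^ (r + s i j - 1))
        = ∑ i : Fin n, ∑ j : Fin n,
            t ^ (r + c) * ((x i * t ^ (n - 1 - (i:ℕ))) * (x j * t ^ (n - 1 - (j:ℕ)))) := by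
          exact Finset.sum_congr rfl fun i _ => Finset.sum_congr rfl fun j _ => hterm i j
      _ = t ^ (r + c) * (F t)^2 := by
          rw [hF, sq, Finset.sum_mul_sum, Finset.mul_sum]
          refine Finset.sum_congr rfl fun i _ => ?_
          rw [Finset.mul_sum]

  -- integrability of the integrand
  have hFcont : Continuous F := by
    rw [hF]
    exact continuous_finset_sum _ fun i _ => (continuous_const.mul (continuous_pow _))
  have hInt : ∀ r : ℝ, 0 ≤ r →
      IntervalIntegrable (fun t => t ^ (r + c) * (F t)^2) volume 0 1 := by
    intro r hr
    exact (intervalIntegrable_rpow (Or.inl (by linarith))).mul_continuousOn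
      ((hFcont.pow 2).continuousOn)
  -- q as an integral
  have hq_eq : ∀ r : ℝ, 0 ≤ r → q r = ∫ t in (0:ℝ)..1, t ^ (r + c) * (F t)^2 := by
    intro r hr
    have hint_ij : ∀ i j : Fin n,
        IntervalIntegrable (fun t => x i * x j * t ^ (r + s i j - 1)) volume 0 1 := by
      intro i j
      exact (intervalIntegrable_rpow (Or.inl (by have := hs2 i j; linarith))).const_mul _
    have hval : ∀ i j : Fin n,
        (∫ t in (0:ℝ)..1, x i * x j * t ^ (r + s i j - 1)) = x i * x j * (s i j + r)⁻¹ := by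
      intro i j
      rw [intervalIntegral.integral_const_mul]
      congr 1
      rw [integral_rpow (Or.inl (by have := hs2 i j; linarith))]
      have h1 : r + s i j - 1 + 1 = s i j + r := by ring
      rw [h1, Real.one_rpow, Real.zero_rpow (by have := hs2 i j; intro h; linarith)]
      rw [sub_zero, one_div]
    calc q r = ∑ i : Fin n, ∑ j : Fin n, ∫ t in (0:ℝ)..1, x i * x j * t ^ (r + s i j - 1) := by
          rw [hq]
          exact Finset.sum_congr rfl fun i _ => Finset.sum_congr rfl fun j _ => (hval i j).symm
      _ = ∫ t in (0:ℝ)..1, ∑ i : Fin n, ∑ j : Fin n, x i * x j * t ^ (r + s i j - 1) := by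
          have h1 : (∫ t in (0:ℝ)..1, ∑ i : Fin n, ∑ j : Fin n, x i * x j * t ^ (r + s i j - 1))
              = ∑ i : Fin n, ∫ t in (0:ℝ)..1, ∑ j : Fin n, x i * x j * t ^ (r + s i j - 1) :=
            intervalIntegral.integral_finset_sum
              (f := fun i t => ∑ j : Fin n, x i * x j * t ^ (r + s i j - 1))
              (fun i _ => by
                have h := IntervalIntegrable.sum
                  (f := fun j t => x i * x j * t ^ (r + s i j - 1)) Finset.univ
                  (fun j _ => hint_ij i j)
                rw [Finset.sum_fn] at h
                exact h)
          have h2 : ∀ i : Fin n, (∫ t in (0:ℝ)..1, ∑ j : Fin n, x i * x j * t ^ (r + s i j - 1))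
              = ∑ j : Fin n, ∫ t in (0:ℝ)..1, x i * x j * t ^ (r + s i j - 1) :=
            fun i => intervalIntegral.integral_finset_sum (fun j _ => hint_ij i j)
          rw [h1]
          exact Finset.sum_congr rfl fun i _ => (h2 i).symm
      _ = ∫ t in (0:ℝ)..1, t ^ (r + c) * (F t)^2 := by
          refine intervalIntegral.integral_congr fun t ht => ?_
          rw [Set.uIcc_of_le (by norm_num : (0:ℝ) ≤ 1)] at ht
          exact hpt r hr t ht

  -- nonnegativity of q
  have hq_nonneg : ∀ r : ℝ, 0 ≤ r → 0 ≤ q r := by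
    intro r hr
    rw [hq_eq r hr]
    apply intervalIntegral.integral_nonneg (by norm_num : (0:ℝ) ≤ 1)
    intro t ht
    exact mul_nonneg (Real.rpow_nonneg ht.1 _) (sq_nonneg _)
  -- monotonicity: q 1 ≤ q r for r ∈ (0,1]
  have hq_mono : ∀ r : ℝ, r ∈ Set.Ioc (0:ℝ) 1 → q 1 ≤ q r := by
    intro r hr
    obtain ⟨hr1, hr2⟩ := hr
    rw [hq_eq r hr1.le, hq_eq 1 (by norm_num)]
    apply intervalIntegral.integral_mono_on (by norm_num : (0:ℝ) ≤ 1)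
      (hInt 1 (by norm_num)) (hInt r hr1.le)
    intro t ht
    apply mul_le_mul_of_nonneg_right _ (sq_nonneg _)
    rcases eq_or_lt_of_le ht.1 with h0 | h0
    · rw [← h0, Real.zero_rpow (by linarith), Real.zero_rpow (by linarith)]
    · exact Real.rpow_le_rpow_of_exponent_ge h0 ht.2 (by linarith)
  -- strict positivity of q 1
  have hq1_pos : 0 < q 1 := by
    rw [hq_eq 1 (by norm_num)]
    set g : ℝ → ℝ := fun t => t ^ ((1:ℝ) + c) * (F t)^2 with hg
    have hnn : 0 ≤ᵐ[volume.restrict (Set.uIoc (0:ℝ) 1)] g := by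
      rw [Set.uIoc_of_le (by norm_num : (0:ℝ) ≤ 1)]
      refine (ae_restrict_iff' measurableSet_Ioc).2 (Filter.Eventually.of_forall ?_)
      intro t ht
      exact mul_nonneg (Real.rpow_nonneg ht.1.le _) (sq_nonneg _)
    rw [intervalIntegral.integral_pos_iff_support_of_nonneg_ae' hnn (hInt 1 (by norm_num))]
    refine ⟨by norm_num, ?_⟩
    obtain ⟨t0, ht0, hFt0⟩ := poly_exists_pt x hx
    have hUopen : IsOpen ({t : ℝ | F t ≠ 0} ∩ Set.Ioo 0 1) := by
      refine IsOpen.inter ?_ isOpen_Ioo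
      exact isOpen_compl_iff.mpr (isClosed_eq hFcont continuous_const)
    have hsub : {t : ℝ | F t ≠ 0} ∩ Set.Ioo 0 1 ⊆ Function.support g ∩ Set.Ioc 0 1 := by
      rintro t ⟨htF, htI⟩
      refine ⟨?_, htI.1, htI.2.le⟩
      simp only [Function.mem_support, hg]
      exact mul_ne_zero (ne_of_gt (Real.rpow_pos_of_pos htI.1 _)) (pow_ne_zero 2 htF)
    calc (0:ENNReal) < volume ({t : ℝ | F t ≠ 0} ∩ Set.Ioo 0 1) :=
          hUopen.measure_pos volume ⟨t0, hFt0, ht0⟩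
      _ ≤ volume (Function.support g ∩ Set.Ioc 0 1) := measure_mono hsub
  -- derivative of φ
  have hderiv : ∀ r ∈ Set.Ici (0:ℝ), HasDerivAt φ (q r) r := by
    intro r hr
    rw [hφ, hq]
    apply HasDerivAt.fun_sum
    intro i _
    apply HasDerivAt.fun_sum
    intro j _
    have hpos : 0 < s i j + r := by have := hs2 i j; simp only [Set.mem_Ici] at hr; linarith
    have h1 : HasDerivAt (fun u : ℝ => s i j + u) 1 r := by
      simpa using (hasDerivAt_id r).const_add (s i j)
    have h2 : HasDerivAt (fun u : ℝ => Real.log (s i j + u)) ((s i j + r)⁻¹ * 1) r :=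
      (Real.hasDerivAt_log (ne_of_gt hpos)).comp r h1
    rw [mul_one] at h2
    simpa [mul_comm, mul_assoc] using h2.const_mul (x i * x j)
  -- φ tends to 0 at infinity
  have htend : Filter.Tendsto φ Filter.atTop (nhds 0) := by
    have halt : ∀ r : ℝ, 0 < r →
        φ r = ∑ i : Fin n, ∑ j : Fin n, x i * x j * Real.log ((s i j + r) / (1 + r)) := by
      intro r hr
      have : ∀ i j : Fin n, x i * x j * Real.log ((s i j + r) / (1 + r))
          = x i * x j * Real.log (s i j + r) - x i * x j * Real.log (1 + r) := by
        intro i j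
        rw [Real.log_div (by have := hs2 i j; positivity) (by positivity)]
        ring
      simp only [this, Finset.sum_sub_distrib]
      have hzero : ∑ i : Fin n, ∑ j : Fin n, x i * x j * Real.log (1 + r) = 0 := by
        have : ∀ i : Fin n, ∑ j : Fin n, x i * x j * Real.log (1 + r)
            = x i * Real.log (1 + r) * ∑ j : Fin n, x j := by
          intro i
          rw [Finset.mul_sum]
          exact Finset.sum_congr rfl fun j _ => by ring
        simp only [this, hsum, mul_zero, Finset.sum_const_zero]
      rw [hzero, sub_zero, hφ]
    have hterm : ∀ i j : Fin n, Filter.Tendsto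
        (fun r : ℝ => x i * x j * Real.log ((s i j + r) / (1 + r))) Filter.atTop (nhds 0) := by
      intro i j
      have h1 : Filter.Tendsto (fun r : ℝ => (s i j - 1) / (1 + r)) Filter.atTop (nhds 0) :=
        Filter.Tendsto.div_atTop tendsto_const_nhds
          (Filter.tendsto_atTop_add_const_left _ 1 Filter.tendsto_id)
      have h2 : Filter.Tendsto (fun r : ℝ => 1 + (s i j - 1) / (1 + r)) Filter.atTop (nhds 1) := by
        have := Filter.Tendsto.const_add (1:ℝ) h1
        simpa using this
      have h3 : Filter.Tendsto (fun r : ℝ => Real.log (1 + (s i j - 1) / (1 + r)))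
          Filter.atTop (nhds 0) := by
        have hcont := (Real.continuousAt_log (by norm_num : (1:ℝ) ≠ 0)).tendsto
        have := hcont.comp h2
        simpa [Real.log_one, Function.comp_def] using this
      have heq : ∀ᶠ r : ℝ in Filter.atTop,
          Real.log (1 + (s i j - 1) / (1 + r)) = Real.log ((s i j + r) / (1 + r)) := by
        filter_upwards [Filter.eventually_gt_atTop (0:ℝ)] with r hr
        congr 1
        field_simp
        ring
      have h4 := h3.congr' heq
      have := h4.const_mul (x i * x j)
      simpa using this
    have hsumtend : Filter.Tendsto
        (fun r : ℝ => ∑ i : Fin n, ∑ j : Fin n, x i * x j * Real.log ((s i j + r) / (1 + r)))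
        Filter.atTop (nhds 0) := by
      have := tendsto_finset_sum Finset.univ
        (fun i (_ : i ∈ Finset.univ) => tendsto_finset_sum Finset.univ
          (fun j (_ : j ∈ Finset.univ) => hterm i j))
      simpa using this
    refine hsumtend.congr' ?_
    filter_upwards [Filter.eventually_gt_atTop (0:ℝ)] with r hr
    exact (halt r hr).symm
  -- FTC on [0, ∞)
  have hFTC : ∫ r in Set.Ioi (0:ℝ), q r = 0 - φ 0 :=
    integral_Ioi_of_hasDerivAt_of_nonneg' hderiv
      (fun r hr => hq_nonneg r (le_of_lt hr)) htend
  have hIntOn : IntegrableOn q (Set.Ioi (0:ℝ)) volume :=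
    integrableOn_Ioi_deriv_of_nonneg' hderiv (fun r hr => hq_nonneg r (le_of_lt hr)) htend
  -- conclusion chain
  have hgoal_eq : (∑ i : Fin n, ∑ j : Fin n, x i * x j * (- Real.log ((N:ℝ) - 1 - (i:ℕ) - (j:ℕ))))
      = - φ 0 := by
    rw [hφ]
    rw [← Finset.sum_neg_distrib]
    refine Finset.sum_congr rfl fun i _ => ?_
    rw [← Finset.sum_neg_distrib]
    refine Finset.sum_congr rfl fun j _ => ?_
    simp only [hs, add_zero]
    ring
  rw [hgoal_eq]
  have hst1 : q 1 ≤ ∫ r in Set.Ioc (0:ℝ) 1, q r := by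
    have hconst : IntegrableOn (fun _ : ℝ => q 1) (Set.Ioc (0:ℝ) 1) volume := by
      refine integrableOn_const ?_ (by simp)
      rw [Real.volume_Ioc]
      norm_num
    have hqint : IntegrableOn q (Set.Ioc (0:ℝ) 1) volume :=
      hIntOn.mono_set Set.Ioc_subset_Ioi_self
    have := setIntegral_mono_on hconst hqint measurableSet_Ioc (fun r hr => hq_mono r hr)
    rw [setIntegral_const] at this
    rw [Real.volume_real_Ioc] at this
    simpa using this
  have hst2 : ∫ r in Set.Ioc (0:ℝ) 1, q r ≤ ∫ r in Set.Ioi (0:ℝ), q r := by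
    apply setIntegral_mono_set hIntOn
    · refine (ae_restrict_iff' measurableSet_Ioi).2 (Filter.Eventually.of_forall ?_)
      intro r hr
      exact hq_nonneg r (le_of_lt hr)
    · exact (Set.Ioc_subset_Ioi_self).eventuallyLE
  have : 0 < ∫ r in Set.Ioi (0:ℝ), q r := lt_of_lt_of_le hq1_pos (le_trans hst1 hst2)
  linarith [this, hFTC]


end ELRC

open ELRC in
theorem entrywise_log_rankone_correction {n N : ℕ} (hN : 2 * n < N) :
    ∃ τ : ℝ, 0 < τ ∧
      ((Matrix.of fun i j : Fin n =>
          Real.log (1 / ((((N : ℝ) + 1) / 2 - ((i : ℕ) + 1))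
            + (((N : ℝ) + 1) / 2 - ((j : ℕ) + 1)))))
        + τ • Matrix.of (fun _ _ : Fin n => (1 : ℝ))).PosSemidef := by
  classical
  set A : Matrix (Fin n) (Fin n) ℝ := Matrix.of fun i j : Fin n =>
      Real.log (1 / ((((N : ℝ) + 1) / 2 - ((i : ℕ) + 1))
        + (((N : ℝ) + 1) / 2 - ((j : ℕ) + 1)))) with hAdef
  have hA : ∀ i j : Fin n, A i j = - Real.log ((N:ℝ) - 1 - (i:ℕ) - (j:ℕ)) := by
    intro i j
    show Real.log (1 / _) = _
    rw [one_div, Real.log_inv]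
    congr 2
    ring
  rcases Nat.eq_zero_or_pos n with hn0 | hn
  · subst hn0
    refine ⟨1, one_pos, Matrix.PosSemidef.of_dotProduct_mulVec_nonneg ?_ ?_⟩
    · ext i j
      exact i.elim0
    · intro v
      simp [dotProduct]
  -- main case n ≥ 1
  set Q : (Fin n → ℝ) → ℝ := fun v => ∑ i : Fin n, ∑ j : Fin n, v i * v j * A i j with hQdef
  have hkey : ∀ v : Fin n → ℝ, (∑ i, v i) = 0 → v ≠ 0 → 0 < Q v := by
    intro v hv hvne
    have := key n N hN v hv hvne
    rw [hQdef]
    simp only [hA]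
    exact this
  have hQcont : Continuous Q := by
    rw [hQdef]
    exact continuous_finset_sum _ fun i _ => continuous_finset_sum _ fun j _ =>
      ((continuous_apply i).mul (continuous_apply j)).mul continuous_const
  have hQsmul : ∀ (a : ℝ) (v : Fin n → ℝ), Q (a • v) = a^2 * Q v := by
    intro a v
    rw [hQdef]
    simp only [Pi.smul_apply, smul_eq_mul, Finset.mul_sum]
    exact Finset.sum_congr rfl fun i _ => Finset.sum_congr rfl fun j _ => by ring
  -- uniform lower bound on the zero-sum subspace
  have hEps : ∃ ε : ℝ, 0 < ε ∧ ∀ v : Fin n → ℝ, (∑ i, v i) = 0 → ε * ‖v‖^2 ≤ Q v := by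
    set S : Set (Fin n → ℝ) := {v | (∑ i, v i) = 0} ∩ {v | ‖v‖ = 1} with hSdef
    have hsumcont : Continuous fun v : Fin n → ℝ => ∑ i, v i :=
      continuous_finset_sum _ fun i _ => continuous_apply i
    have hSclosed : IsClosed S :=
      (isClosed_eq hsumcont continuous_const).inter (isClosed_eq continuous_norm continuous_const)
    have hScompact : IsCompact S := by
      refine (isCompact_closedBall (0 : Fin n → ℝ) 1).of_isClosed_subset hSclosed ?_
      intro v hv
      rw [Metric.mem_closedBall, dist_zero_right, hv.2]
    have hgen : ∀ ε : ℝ, 0 < ε → (∀ v ∈ S, ε ≤ Q v) →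
        ∀ v : Fin n → ℝ, (∑ i, v i) = 0 → ε * ‖v‖^2 ≤ Q v := by
      intro ε hε hS v hv
      rcases eq_or_ne v 0 with rfl | hvne
      · simp [hQdef]
      · have hnv : ‖v‖ ≠ 0 := norm_ne_zero_iff.2 hvne
        set u : Fin n → ℝ := ‖v‖⁻¹ • v with hu
        have huS : u ∈ S := by
          constructor
          · show (∑ i, u i) = 0
            simp only [hu, Pi.smul_apply, smul_eq_mul, ← Finset.mul_sum, hv, mul_zero]
          · show ‖u‖ = 1
            rw [hu, norm_smul, Real.norm_eq_abs, abs_inv, abs_norm]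
            exact inv_mul_cancel₀ hnv
        have hvu : v = ‖v‖ • u := by
          rw [hu, smul_smul, mul_inv_cancel₀ hnv, one_smul]
        have hQv : Q v = ‖v‖^2 * Q u := by
          conv_lhs => rw [hvu]
          rw [hQsmul]
        have hQu := hS u huS
        nlinarith [sq_nonneg ‖v‖, hQu, hQv]
    rcases Set.eq_empty_or_nonempty S with hSe | hSne
    · refine ⟨1, one_pos, hgen 1 one_pos ?_⟩
      intro v hv
      rw [hSe] at hv
      exact absurd hv (Set.notMem_empty v)
    · obtain ⟨v0, hv0S, hmin⟩ := hScompact.exists_isMinOn hSne hQcont.continuousOn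
      have hv0ne : v0 ≠ 0 := by
        intro h
        have := hv0S.2
        rw [h] at this
        simp at this
      have hεpos : 0 < Q v0 := hkey v0 hv0S.1 hv0ne
      exact ⟨Q v0, hεpos, hgen _ hεpos fun v hv => hmin hv⟩
  obtain ⟨ε, hε, hεQ⟩ := hEps
  -- bound constant
  set B : ℝ := (∑ i : Fin n, ∑ j : Fin n, |A i j|) + 1 with hBdef
  have hB1 : 1 ≤ B := by
    have : 0 ≤ ∑ i : Fin n, ∑ j : Fin n, |A i j| :=
      Finset.sum_nonneg fun i _ => Finset.sum_nonneg fun j _ => abs_nonneg _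
    rw [hBdef]; linarith
  have hB : 0 < B := by linarith
  have habs : ∀ w : Fin n → ℝ, |∑ i : Fin n, ∑ j : Fin n, w i * A i j| ≤ B * ‖w‖ := by
    intro w
    calc |∑ i : Fin n, ∑ j : Fin n, w i * A i j|
        ≤ ∑ i : Fin n, |∑ j : Fin n, w i * A i j| := Finset.abs_sum_le_sum_abs _ _
      _ ≤ ∑ i : Fin n, ∑ j : Fin n, |w i * A i j| :=
          Finset.sum_le_sum fun i _ => Finset.abs_sum_le_sum_abs _ _
      _ ≤ ∑ i : Fin n, ∑ j : Fin n, ‖w‖ * |A i j| := by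
          refine Finset.sum_le_sum fun i _ => Finset.sum_le_sum fun j _ => ?_
          rw [abs_mul]
          apply mul_le_mul_of_nonneg_right _ (abs_nonneg _)
          calc |w i| = ‖w i‖ := (Real.norm_eq_abs _).symm
            _ ≤ ‖w‖ := norm_le_pi_norm w i
      _ = (∑ i : Fin n, ∑ j : Fin n, |A i j|) * ‖w‖ := by
          rw [Finset.sum_mul]
          refine Finset.sum_congr rfl fun i _ => ?_
          rw [Finset.sum_mul]
          exact Finset.sum_congr rfl fun j _ => mul_comm _ _
      _ ≤ B * ‖w‖ := by
          apply mul_le_mul_of_nonneg_right _ (norm_nonneg w)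
          rw [hBdef]; linarith
  have habsE : |∑ i : Fin n, ∑ j : Fin n, A i j| ≤ B := by
    calc |∑ i : Fin n, ∑ j : Fin n, A i j|
        ≤ ∑ i : Fin n, |∑ j : Fin n, A i j| := Finset.abs_sum_le_sum_abs _ _
      _ ≤ ∑ i : Fin n, ∑ j : Fin n, |A i j| :=
          Finset.sum_le_sum fun i _ => Finset.abs_sum_le_sum_abs _ _
      _ ≤ B := by rw [hBdef]; linarith
  set δ : ℝ := B^2 / ε with hδdef
  have hδ : ε * δ = B^2 := by
    rw [hδdef]
    field_simp
  set τ : ℝ := B + δ + 1 with hτdef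
  have hδ0 : 0 ≤ δ := by positivity
  have hτpos : 0 < τ := by rw [hτdef]; linarith
  refine ⟨τ, hτpos, Matrix.PosSemidef.of_dotProduct_mulVec_nonneg ?_ ?_⟩
  · -- Hermitian
    ext i j
    show star (A j i + τ • (1:ℝ)) = A i j + τ • (1:ℝ)
    rw [star_trivial, smul_eq_mul, mul_one, hA, hA]
    have h : (N:ℝ) - 1 - (j:ℕ) - (i:ℕ) = (N:ℝ) - 1 - (i:ℕ) - (j:ℕ) := by ring
    rw [h]
  · -- quadratic form nonneg
    intro v
    have hquad : star v ⬝ᵥ ((A + τ • Matrix.of (fun _ _ : Fin n => (1:ℝ))) *ᵥ v)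
        = Q v + τ * (∑ i, v i)^2 := by
      have hsv : star v = v := by
        funext i
        exact star_trivial _
      rw [hsv]
      calc v ⬝ᵥ ((A + τ • Matrix.of (fun _ _ : Fin n => (1:ℝ))) *ᵥ v)
          = ∑ i : Fin n, ∑ j : Fin n, v i * ((A i j + τ) * v j) := by
            simp only [dotProduct, Matrix.mulVec, Matrix.add_apply, Matrix.smul_apply,
              Matrix.of_apply, smul_eq_mul, mul_one, Finset.mul_sum]
        _ = (∑ i : Fin n, ∑ j : Fin n, v i * v j * A i j)
              + ∑ i : Fin n, ∑ j : Fin n, τ * (v i * v j) := by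
            rw [← Finset.sum_add_distrib]
            refine Finset.sum_congr rfl fun i _ => ?_
            rw [← Finset.sum_add_distrib]
            exact Finset.sum_congr rfl fun j _ => by ring
        _ = Q v + τ * (∑ i, v i)^2 := by
            rw [hQdef]
            congr 1
            rw [sq, Finset.sum_mul_sum, Finset.mul_sum]
            exact Finset.sum_congr rfl fun i _ => by rw [Finset.mul_sum]
    rw [hquad]
    -- decompose v = y + m
    set m : ℝ := (∑ i, v i) / n with hmdef
    set y : Fin n → ℝ := fun i => v i - m with hydef
    have hn0 : (n:ℝ) ≠ 0 := by
      exact_mod_cast Nat.pos_iff_ne_zero.1 hn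
    have hn1 : (1:ℝ) ≤ (n:ℝ) := by exact_mod_cast hn
    have hvs : (∑ i, v i) = n * m := by
      rw [hmdef]
      field_simp
    have hsumy : (∑ i, y i) = 0 := by
      simp only [hydef, Finset.sum_sub_distrib, Finset.sum_const, Finset.card_univ,
        Fintype.card_fin, nsmul_eq_mul, hvs]
      ring
    set T1 : ℝ := ∑ i : Fin n, ∑ j : Fin n, y i * A i j with hT1def
    set T2 : ℝ := ∑ i : Fin n, ∑ j : Fin n, y j * A i j with hT2def
    set PE : ℝ := ∑ i : Fin n, ∑ j : Fin n, A i j with hPEdef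
    have hdecomp : Q v = Q y + m * T1 + m * T2 + m^2 * PE := by
      have h0 : ∀ w : Fin n → ℝ, Q w = ∑ i : Fin n, ∑ j : Fin n, w i * w j * A i j :=
        fun w => rfl
      rw [h0 v, h0 y, hT1def, hT2def, hPEdef]
      calc ∑ i : Fin n, ∑ j : Fin n, v i * v j * A i j
          = ∑ i : Fin n, ∑ j : Fin n,
              (y i * y j * A i j + (m * (y i * A i j)
                + (m * (y j * A i j) + m^2 * A i j))) := by
            refine Finset.sum_congr rfl fun i _ => Finset.sum_congr rfl fun j _ => ?_
            have hvi : v i = y i + m := by rw [hydef]; ring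
            have hvj : v j = y j + m := by rw [hydef]; ring
            rw [hvi, hvj]
            ring
        _ = _ := by
            simp only [Finset.sum_add_distrib, mul_double_sum]
            simp only [← Finset.mul_sum]
            ring
    have hQy : ε * ‖y‖^2 ≤ Q y := hεQ y hsumy
    have hb1 : |T1| ≤ B * ‖y‖ := habs y
    have hb2 : |T2| ≤ B * ‖y‖ := by
      have : T2 = ∑ j : Fin n, ∑ i : Fin n, y j * A i j := by
        rw [hT2def]; exact Finset.sum_comm
      rw [this]
      calc |∑ j : Fin n, ∑ i : Fin n, y j * A i j|
          ≤ ∑ j : Fin n, |∑ i : Fin n, y j * A i j| := Finset.abs_sum_le_sum_abs _ _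
        _ ≤ ∑ j : Fin n, ∑ i : Fin n, |y j * A i j| :=
            Finset.sum_le_sum fun j _ => Finset.abs_sum_le_sum_abs _ _
        _ ≤ ∑ j : Fin n, ∑ i : Fin n, ‖y‖ * |A i j| := by
            refine Finset.sum_le_sum fun j _ => Finset.sum_le_sum fun i _ => ?_
            rw [abs_mul]
            apply mul_le_mul_of_nonneg_right _ (abs_nonneg _)
            calc |y j| = ‖y j‖ := (Real.norm_eq_abs _).symm
              _ ≤ ‖y‖ := norm_le_pi_norm y j
        _ = (∑ j : Fin n, ∑ i : Fin n, |A i j|) * ‖y‖ := by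
            rw [Finset.sum_mul]
            refine Finset.sum_congr rfl fun j _ => ?_
            rw [Finset.sum_mul]
            exact Finset.sum_congr rfl fun i _ => mul_comm _ _
        _ ≤ B * ‖y‖ := by
            apply mul_le_mul_of_nonneg_right _ (norm_nonneg y)
            rw [Finset.sum_comm, hBdef]
            linarith
    have hb3 : |PE| ≤ B := habsE
    -- final arithmetic
    have e1 : -(|m| * (B * ‖y‖)) ≤ m * T1 := by
      calc -(|m| * (B * ‖y‖)) ≤ -(|m| * |T1|) := by
            have := mul_le_mul_of_nonneg_left hb1 (abs_nonneg m)
            linarith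
        _ ≤ -|m * T1| := by rw [abs_mul]
        _ ≤ m * T1 := neg_abs_le _
    have e2 : -(|m| * (B * ‖y‖)) ≤ m * T2 := by
      calc -(|m| * (B * ‖y‖)) ≤ -(|m| * |T2|) := by
            have := mul_le_mul_of_nonneg_left hb2 (abs_nonneg m)
            linarith
        _ ≤ -|m * T2| := by rw [abs_mul]
        _ ≤ m * T2 := neg_abs_le _
    have e3 : -(m^2 * B) ≤ m^2 * PE := by
      calc -(m^2 * B) ≤ -(m^2 * |PE|) := by
            have := mul_le_mul_of_nonneg_left hb3 (sq_nonneg m)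
            linarith
        _ ≤ m^2 * PE := by
            have := neg_abs_le PE
            nlinarith [sq_nonneg m, abs_nonneg PE]
    have e4 : τ * m^2 ≤ τ * (∑ i, v i)^2 := by
      rw [hvs]
      have hsq : 1 ≤ (n:ℝ)^2 := by nlinarith [hn1]
      have : m^2 ≤ ((n:ℝ)*m)^2 := by nlinarith [mul_le_mul_of_nonneg_right hsq (sq_nonneg m)]
      exact mul_le_mul_of_nonneg_left this hτpos.le
    have hAMGM : 0 ≤ ε * ‖y‖^2 - 2 * (|m| * (B * ‖y‖)) + (δ + B + 1) * m^2 - B * m^2 := by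
      nlinarith [sq_nonneg (ε * ‖y‖ - B * |m|), sq_abs m, hε, hδ,
        mul_nonneg hε.le (sq_nonneg m), sq_nonneg m]
    rw [hdecomp]
    have hτm : (δ + B + 1) * m^2 = τ * m^2 := by rw [hτdef]; ring
    nlinarith [hQy, e1, e2, e3, e4, hAMGM]
end
end

section
/- For the algebraically decaying couplings J_{i,j} = −|i−j|^{−p} with p ≥ 0 on a chain of N sites (N even), the (N/2)×(N/2) matrix 𝒥 with entries 𝒥_{ij} = J_{i,N+1−j} = −(ζ(i)+ζ(j))^{−p}, ζ(i) = (N+1)/2 − i, is negative semidefinite. -/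
open Matrix

noncomputable section

open MeasureTheory Real Set in
lemma aux_integrable {c p : ℝ} (hc : 0 < c) (hp : 0 < p) :
    IntegrableOn (fun u : ℝ => u ^ (p - 1) * Real.exp (-(c * u))) (Ioi 0) := by
  have h := integrableOn_rpow_mul_exp_neg_mul_rpow (p := 1) (s := p - 1) (b := c)
    (by linarith) zero_lt_one hc
  simpa only [Real.rpow_one, neg_mul] using h

open MeasureTheory Real Set in
lemma aux_key {s : Finset ι} (t : ι → ℝ) (ht : ∀ i ∈ s, 0 < t i) (x : ι → ℝ)
    {p : ℝ} (hp : 0 < p) :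
    0 ≤ ∑ i ∈ s, ∑ j ∈ s, x i * (t i + t j) ^ (-p) * x j := by
  have hG : 0 < Real.Gamma p := Real.Gamma_pos_of_pos hp
  have key : ∀ i ∈ s, ∀ j ∈ s,
      x i * (t i + t j) ^ (-p) * x j =
        (Real.Gamma p)⁻¹ *
          ∫ u in Ioi (0:ℝ), (x i * x j) *
            (u ^ (p - 1) * Real.exp (-((t i + t j) * u))) := by
    intro i hi j hj
    have hr : 0 < t i + t j := by have := ht i hi; have := ht j hj; linarith
    rw [integral_const_mul, Real.integral_rpow_mul_exp_neg_mul_Ioi hp hr, one_div,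
      Real.inv_rpow hr.le, ← Real.rpow_neg hr.le]
    field_simp
  rw [Finset.sum_congr rfl fun i hi => Finset.sum_congr rfl (key i hi)]
  simp_rw [← Finset.mul_sum]
  have hint : ∀ i ∈ s, ∀ j ∈ s, IntegrableOn
      (fun u : ℝ => (x i * x j) * (u ^ (p - 1) * Real.exp (-((t i + t j) * u))))
      (Ioi 0) := by
    intro i hi j hj
    have hr : 0 < t i + t j := by have := ht i hi; have := ht j hj; linarith
    exact (aux_integrable hr hp).const_mul _
  have swap : ∑ i ∈ s, ∑ j ∈ s, (∫ u in Ioi (0:ℝ),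
      (x i * x j) * (u ^ (p - 1) * Real.exp (-((t i + t j) * u))))
      = ∫ u in Ioi (0:ℝ), ∑ i ∈ s, ∑ j ∈ s,
        (x i * x j) * (u ^ (p - 1) * Real.exp (-((t i + t j) * u))) := by
    calc ∑ i ∈ s, ∑ j ∈ s, (∫ u in Ioi (0:ℝ),
        (x i * x j) * (u ^ (p - 1) * Real.exp (-((t i + t j) * u))))
        = ∑ i ∈ s, ∫ u in Ioi (0:ℝ), ∑ j ∈ s,
          (x i * x j) * (u ^ (p - 1) * Real.exp (-((t i + t j) * u))) :=
          Finset.sum_congr rfl fun i hi => (integral_finset_sum s (hint i hi)).symm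
      _ = _ := (integral_finset_sum s fun i hi =>
          integrable_finset_sum s (hint i hi)).symm
  rw [swap]
  refine mul_nonneg (by positivity) (setIntegral_nonneg measurableSet_Ioi fun u hu => ?_)
  have hu0 : (0:ℝ) < u := hu
  have : ∑ i ∈ s, ∑ j ∈ s, (x i * x j) * (u ^ (p - 1) * Real.exp (-((t i + t j) * u)))
      = u ^ (p - 1) * (∑ i ∈ s, x i * Real.exp (-(t i * u)))^2 := by
    rw [sq, Finset.sum_mul_sum, Finset.mul_sum]
    simp_rw [Finset.mul_sum]
    refine Finset.sum_congr rfl fun i _ => Finset.sum_congr rfl fun j _ => ?_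
    rw [show -((t i + t j) * u) = -(t i * u) + -(t j * u) by ring, Real.exp_add]
    ring
  rw [this]
  positivity

open Finset in
theorem coupling_matrix_negative_semidef {n N : ℕ} (hN : N = 2 * n)
    (p : ℝ) (hp : 0 ≤ p) :
    (-(Matrix.of fun i j : Fin n =>
        -(((N : ℝ) + 1 - ((i : ℕ) + 1) - ((j : ℕ) + 1)) ^ (-p)))).PosSemidef := by
  set t : Fin n → ℝ := fun i => (n : ℝ) - (i : ℕ) - 1/2 with ht_def
  have ht : ∀ i : Fin n, 0 < t i := by
    intro i
    have h1 : ((i : ℕ) : ℝ) + 1 ≤ (n : ℝ) := by exact_mod_cast i.isLt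
    simp only [ht_def]; linarith
  have hentry : ∀ i j : Fin n,
      (-(Matrix.of fun i j : Fin n =>
        -(((N : ℝ) + 1 - ((i : ℕ) + 1) - ((j : ℕ) + 1)) ^ (-p)))) i j
        = (t i + t j) ^ (-p) := by
    intro i j
    simp only [Matrix.neg_apply, Matrix.of_apply, neg_neg, ht_def]
    congr 1
    rw [hN]; push_cast; ring
  rw [posSemidef_iff_dotProduct_mulVec]
  constructor
  · ext i j
    simp only [conjTranspose_apply, star_trivial, hentry, add_comm]
  · intro x
    simp only [star_trivial, dotProduct, Matrix.mulVec, dotProduct]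
    have : ∑ i, x i * ∑ j, (-(Matrix.of fun i j : Fin n =>
        -(((N : ℝ) + 1 - ((i : ℕ) + 1) - ((j : ℕ) + 1)) ^ (-p)))) i j * x j
        = ∑ i, ∑ j, x i * (t i + t j) ^ (-p) * x j := by
      refine Finset.sum_congr rfl fun i _ => ?_
      rw [Finset.mul_sum]
      refine Finset.sum_congr rfl fun j _ => ?_
      rw [hentry]; ring
    rw [this]
    rcases hp.eq_or_lt with h0 | hpos
    · simp only [← h0, neg_zero, Real.rpow_zero]
      have : ∑ i, ∑ j, x i * 1 * x j = (∑ i, x i)^2 := by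
        rw [sq, Finset.sum_mul_sum]; simp
      rw [this]; positivity
    · exact aux_key t (fun i _ => ht i) x hpos

end
end
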